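/- arXiv:0705.2823 — 6 statements merged into one kernel-verified Lean document; each statement's English description precedes it below -/
import Mathlib

section
/- The q-analog of the binomial coefficient satisfies: the cyclotomic polynomial φ_d(q) divides the Gaussian binomial coefficient [n choose k]_q if and only if d does not divide k, whenever d divides n and 0 ≤ k ≤ n. (Here we assume d > 1.) -/
open Polynomial Finset

/-- The q-analog `[m]_q = 1 + q + ⋯ + q^{m-1}` as a polynomial over `ℚ`. -/
noncomputable def qAnalog (m : ℕ) : Polynomial ℚ := ∑ i ∈ Finset.range m, X ^ i

/-- The q-factorial `[m]_q! = ∏_{i=1}^m [i]_q`. -/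
noncomputable def qFactorial (m : ℕ) : Polynomial ℚ :=
  ∏ i ∈ Finset.range m, qAnalog (i + 1)

/-- The Gaussian binomial coefficient `[n choose k]_q = [n]_q! / ([k]_q! [n-k]_q!)`,
defined via division by the (monic) denominator. -/
noncomputable def qBinom (n k : ℕ) : Polynomial ℚ :=
  qFactorial n /ₘ (qFactorial k * qFactorial (n - k))

lemma qAnalog_mul_X_sub_one (m : ℕ) : qAnalog m * (X - 1) = X ^ m - 1 := by
  simpa [qAnalog] using geom_sum_mul (X : Polynomial ℚ) m

lemma qAnalog_monic (m : ℕ) : Monic (qAnalog (m + 1)) := by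
  have h : qAnalog (m + 1) = X ^ m + qAnalog m := by
    simp [qAnalog, Finset.sum_range_succ, add_comm]
  rw [h]
  apply monic_X_pow_add
  apply lt_of_le_of_lt (Polynomial.degree_sum_le _ _)
  rw [Finset.sup_lt_iff (by exact_mod_cast WithBot.bot_lt_coe m)]
  intro i hi
  rw [Polynomial.degree_X_pow]
  exact_mod_cast Finset.mem_range.1 hi

lemma qFactorial_monic (m : ℕ) : Monic (qFactorial m) :=
  monic_prod_of_monic _ _ fun i _ => qAnalog_monic i

lemma qFactorial_zero : qFactorial 0 = 1 := Finset.prod_range_zero _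

lemma qFactorial_succ (m : ℕ) : qFactorial (m + 1) = qFactorial m * qAnalog (m + 1) := by
  rw [qFactorial, Finset.prod_range_succ, qFactorial]

lemma qAnalog_add (a b : ℕ) : qAnalog (a + b) = qAnalog a + X ^ a * qAnalog b := by
  rw [qAnalog, Finset.sum_range_add]
  congr 1
  rw [qAnalog, Finset.mul_sum]
  exact Finset.sum_congr rfl fun i _ => by rw [pow_add]

/-- The key divisibility: `[k]_q! [n-k]_q! ∣ [n]_q!`. -/
lemma qFactorial_mul_dvd : ∀ n k : ℕ, k ≤ n →
    qFactorial k * qFactorial (n - k) ∣ qFactorial n := by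
  intro n
  induction n with
  | zero => intro k hk; interval_cases k; simp [qFactorial_zero]
  | succ n ih =>
    intro k hk
    rcases Nat.eq_zero_or_pos k with rfl | hk0
    · simp [qFactorial_zero]
    rcases eq_or_lt_of_le hk with rfl | hlt
    · simp [qFactorial_zero]
    obtain ⟨k, rfl⟩ : ∃ j, k = j + 1 := ⟨k - 1, by omega⟩
    have hsplit : n + 1 - (k + 1) = n - k := by omega
    have h1 : qFactorial (k + 1) * qFactorial (n + 1 - (k + 1)) ∣
        qFactorial n * qAnalog (k + 1) := by
      rw [hsplit, qFactorial_succ]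
      calc qFactorial k * qAnalog (k + 1) * qFactorial (n - k)
          = qFactorial k * qFactorial (n - k) * qAnalog (k + 1) := by ring
        _ ∣ qFactorial n * qAnalog (k + 1) := mul_dvd_mul (ih k (by omega)) dvd_rfl
    have h2 : qFactorial (k + 1) * qFactorial (n + 1 - (k + 1)) ∣
        qFactorial n * (X ^ (k + 1) * qAnalog (n - k)) := by
      rw [hsplit]
      have hnk1 : n - (k + 1) + 1 = n - k := by omega
      have e : qFactorial (n - k) = qFactorial (n - (k + 1)) * qAnalog (n - k) := by
        rw [← hnk1, qFactorial_succ]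
      calc qFactorial (k + 1) * qFactorial (n - k)
          = qFactorial (k + 1) * qFactorial (n - (k + 1)) * qAnalog (n - k) := by
            rw [e]; ring
        _ ∣ qFactorial n * qAnalog (n - k) := by
            have := ih (k + 1) (by omega)
            rw [show n - (k + 1) = n - (k + 1) from rfl] at this
            exact mul_dvd_mul this dvd_rfl
        _ ∣ qFactorial n * (X ^ (k + 1) * qAnalog (n - k)) := ⟨X ^ (k + 1), by ring⟩
    have hdecomp : qFactorial (n + 1) =
        qFactorial n * qAnalog (k + 1) + qFactorial n * (X ^ (k + 1) * qAnalog (n - k)) := by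
      rw [qFactorial_succ]
      have hsum : qAnalog (n + 1) = qAnalog (k + 1) + X ^ (k + 1) * qAnalog (n - k) := by
        have h : n + 1 = (k + 1) + (n - k) := by omega
        rw [h, qAnalog_add]
      rw [hsum]; ring
    rw [hdecomp]
    exact dvd_add h1 h2

section Cyclo

variable {d : ℕ} (hd : 1 < d)

include hd in
lemma cyclo_not_unit : ¬ IsUnit (cyclotomic d ℚ) :=
  (cyclotomic.irreducible_rat (by omega)).not_isUnit

include hd in
lemma cyclo_prime : Prime (cyclotomic d ℚ) :=
  (cyclotomic.irreducible_rat (by omega : 0 < d)).prime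

include hd in
lemma cyclo_dvd_X_pow_sub_one_imp {m : ℕ} (hm : 0 < m)
    (h : cyclotomic d ℚ ∣ X ^ m - 1) : d ∣ m := by
  rw [← prod_cyclotomic_eq_X_pow_sub_one hm] at h
  obtain ⟨i, hi, hdvd⟩ := (Prime.dvd_finset_prod_iff (cyclo_prime hd) _).1 h
  rcases eq_or_ne d i with rfl | hne
  · exact (Nat.mem_divisors.1 hi).1
  · exact absurd ((cyclotomic.isCoprime_rat hne).isUnit_of_dvd' dvd_rfl hdvd)
      (cyclo_not_unit hd)

include hd in
lemma cyclo_dvd_qAnalog_iff {m : ℕ} (hm : 0 < m) :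
    cyclotomic d ℚ ∣ qAnalog m ↔ d ∣ m := by
  constructor
  · intro h
    exact cyclo_dvd_X_pow_sub_one_imp hd hm
      (qAnalog_mul_X_sub_one m ▸ h.mul_right (X - 1))
  · intro h
    exact cyclotomic_dvd_geom_sum_of_dvd ℚ h (by omega)

include hd in
lemma cyclo_sq_not_dvd {m : ℕ} (hm : 0 < m) :
    ¬ (cyclotomic d ℚ * cyclotomic d ℚ ∣ qAnalog m) := by
  intro h
  have hsq : Squarefree (X ^ m - 1 : Polynomial ℚ) :=
    (X_pow_sub_one_separable_iff.2 (by exact_mod_cast Nat.cast_ne_zero.2 hm.ne')).squarefree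
  have h2 : cyclotomic d ℚ * cyclotomic d ℚ ∣ X ^ m - 1 :=
    qAnalog_mul_X_sub_one m ▸ h.mul_right (X - 1)
  exact cyclo_not_unit hd (hsq _ h2)

include hd in
/-- Exact power of `φ_d` dividing `[m]_q!`. -/
lemma qFactorial_factor (m : ℕ) :
    ∃ g, qFactorial m = cyclotomic d ℚ ^ (m / d) * g ∧ ¬ cyclotomic d ℚ ∣ g := by
  induction m with
  | zero =>
    exact ⟨1, by simp [qFactorial], fun h => cyclo_not_unit hd (isUnit_of_dvd_one h)⟩
  | succ m ih =>
    obtain ⟨g, hg, hpg⟩ := ih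
    by_cases hdm : d ∣ m + 1
    · obtain ⟨h, hh⟩ := (cyclo_dvd_qAnalog_iff hd (Nat.succ_pos m)).2 hdm
      have hph : ¬ cyclotomic d ℚ ∣ h := by
        intro hc
        exact cyclo_sq_not_dvd hd (Nat.succ_pos m) (by rw [hh]; exact mul_dvd_mul_left _ hc)
      refine ⟨g * h, ?_, fun hc => ((cyclo_prime hd).dvd_mul.mp hc).elim hpg hph⟩
      rw [qFactorial_succ, hg, hh, Nat.succ_div, if_pos hdm, pow_add]
      ring
    · have hpq : ¬ cyclotomic d ℚ ∣ qAnalog (m + 1) := fun hc =>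
        hdm ((cyclo_dvd_qAnalog_iff hd (Nat.succ_pos m)).1 hc)
      refine ⟨g * qAnalog (m + 1), ?_, fun hc =>
        ((cyclo_prime hd).dvd_mul.mp hc).elim hpg hpq⟩
      rw [qFactorial_succ, hg, Nat.succ_div, if_neg hdm]
      ring

end Cyclo

/-- For a divisor `d > 1` of `n` and `0 ≤ k ≤ n`, the cyclotomic polynomial `φ_d(q)`
divides `[n choose k]_q` if and only if `d` does not divide `k`. -/
theorem stmt_0 (n d k : ℕ) (hdn : d ∣ n) (hd : 1 < d) (hk : k ≤ n) :
    cyclotomic d ℚ ∣ qBinom n k ↔ ¬ d ∣ k := by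
  have hp0 : cyclotomic d ℚ ≠ 0 := (cyclotomic.irreducible_rat (by omega : 0 < d)).ne_zero
  have hprime : Prime (cyclotomic d ℚ) := cyclo_prime hd
  have hMmonic : Monic (qFactorial k * qFactorial (n - k)) :=
    (qFactorial_monic k).mul (qFactorial_monic (n - k))
  have hdvd := qFactorial_mul_dvd n k hk
  have key : qFactorial n = qBinom n k * (qFactorial k * qFactorial (n - k)) := by
    have h := Polynomial.modByMonic_add_div (qFactorial n) (qFactorial k * qFactorial (n - k))
    rw [(Polynomial.modByMonic_eq_zero_iff_dvd hMmonic).2 hdvd, zero_add] at h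
    conv_lhs => rw [← h]
    rw [qBinom]; ring
  obtain ⟨w, hw, hpw⟩ := qFactorial_factor hd (d := d) n
  obtain ⟨g, hg, hpg⟩ := qFactorial_factor hd (d := d) k
  obtain ⟨h, hh, hph⟩ := qFactorial_factor hd (d := d) (n - k)
  have hd0 : 0 < d := by omega
  obtain ⟨c2, rfl⟩ := hdn
  have hnd : d * c2 / d = c2 := Nat.mul_div_cancel_left _ hd0
  rw [hnd] at hw
  by_cases hdk : d ∣ k
  · -- exponents balance; the cyclotomic does not divide the binomial
    obtain ⟨c1, rfl⟩ := hdk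
    have hc12 : c1 ≤ c2 := Nat.le_of_mul_le_mul_left hk hd0
    have hkd : d * c1 / d = c1 := Nat.mul_div_cancel_left _ hd0
    have hnkd : (d * c2 - d * c1) / d = c2 - c1 := by
      rw [← Nat.mul_sub, Nat.mul_div_cancel_left _ hd0]
    rw [hkd] at hg
    rw [hnkd] at hh
    have heq : cyclotomic d ℚ ^ c2 * w =
        qBinom (d * c2) (d * c1) * (cyclotomic d ℚ ^ c2 * (g * h)) := by
      calc cyclotomic d ℚ ^ c2 * w = qFactorial (d * c2) := hw.symm
        _ = qBinom (d * c2) (d * c1) * (qFactorial (d * c1) * qFactorial (d * c2 - d * c1)) :=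
            key
        _ = qBinom (d * c2) (d * c1) *
              (cyclotomic d ℚ ^ (c1 + (c2 - c1)) * (g * h)) := by
            rw [hg, hh, pow_add]; ring
        _ = qBinom (d * c2) (d * c1) * (cyclotomic d ℚ ^ c2 * (g * h)) := by
            rw [show c1 + (c2 - c1) = c2 by omega]
    have hcancel : w = qBinom (d * c2) (d * c1) * (g * h) := by
      rw [show qBinom (d * c2) (d * c1) * (cyclotomic d ℚ ^ c2 * (g * h))
          = cyclotomic d ℚ ^ c2 * (qBinom (d * c2) (d * c1) * (g * h)) by ring] at heq
      exact mul_left_cancel₀ (pow_ne_zero _ hp0) heq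
    constructor
    · intro hpb
      exact absurd (hcancel ▸ hpb.mul_right (g * h)) hpw
    · exact fun h' => absurd ⟨c1, rfl⟩ h'
  · -- d does not divide k : the cyclotomic divides the binomial
    refine iff_of_true ?_ hdk
    obtain ⟨c1, r, hr1, hr2, hkeq⟩ : ∃ c1 r, 0 < r ∧ r < d ∧ k = d * c1 + r :=
      ⟨k / d, k % d, Nat.pos_of_ne_zero (fun h0 => hdk (Nat.dvd_of_mod_eq_zero h0)),
        Nat.mod_lt _ hd0, (Nat.div_add_mod k d).symm⟩
    have hc12 : c1 + 1 ≤ c2 := by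
      have hkn : k < d * c2 := lt_of_le_of_ne hk (fun h0 => hdk (h0 ▸ ⟨c2, rfl⟩))
      nlinarith
    have hkd : k / d = c1 := by
      rw [hkeq, Nat.mul_add_div hd0, Nat.div_eq_of_lt hr2, add_zero]
    have hnkd : (d * c2 - k) / d = c2 - c1 - 1 := by
      have h4 : d * (c1 + 1) ≤ d * c2 := Nat.mul_le_mul le_rfl hc12
      have h5 : d * (c2 - c1 - 1) = d * c2 - d * c1 - d := by
        rw [Nat.mul_sub, Nat.mul_sub, mul_one]
      have h6 : d * (c1 + 1) = d * c1 + d := by ring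
      have h0 : d * c2 - k = d * (c2 - c1 - 1) + (d - r) := by omega
      rw [h0, Nat.mul_add_div hd0, Nat.div_eq_of_lt (by omega), add_zero]
    rw [hkd] at hg
    rw [hnkd] at hh
    have heq : cyclotomic d ℚ ^ c2 * w =
        qBinom (d * c2) k * (cyclotomic d ℚ ^ (c2 - 1) * (g * h)) := by
      calc cyclotomic d ℚ ^ c2 * w = qFactorial (d * c2) := hw.symm
        _ = qBinom (d * c2) k * (qFactorial k * qFactorial (d * c2 - k)) := key
        _ = qBinom (d * c2) k * (cyclotomic d ℚ ^ (c1 + (c2 - c1 - 1)) * (g * h)) := by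
            rw [hg, hh, pow_add]; ring
        _ = qBinom (d * c2) k * (cyclotomic d ℚ ^ (c2 - 1) * (g * h)) := by
            rw [show c1 + (c2 - c1 - 1) = c2 - 1 by omega]
    have heq2 : cyclotomic d ℚ * w = qBinom (d * c2) k * (g * h) := by
      have hc2 : (c2 - 1) + 1 = c2 := by omega
      have h3 : cyclotomic d ℚ ^ (c2 - 1) * (cyclotomic d ℚ * w)
          = cyclotomic d ℚ ^ (c2 - 1) * (qBinom (d * c2) k * (g * h)) := by
        calc cyclotomic d ℚ ^ (c2 - 1) * (cyclotomic d ℚ * w)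
            = cyclotomic d ℚ ^ ((c2 - 1) + 1) * w := by rw [pow_succ]; ring
          _ = cyclotomic d ℚ ^ c2 * w := by rw [hc2]
          _ = qBinom (d * c2) k * (cyclotomic d ℚ ^ (c2 - 1) * (g * h)) := heq
          _ = cyclotomic d ℚ ^ (c2 - 1) * (qBinom (d * c2) k * (g * h)) := by ring
      exact mul_left_cancel₀ (pow_ne_zero _ hp0) h3
    have hdvd2 : cyclotomic d ℚ ∣ qBinom (d * c2) k * (g * h) := ⟨w, heq2.symm⟩
    rcases hprime.dvd_mul.mp hdvd2 with h1 | h2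
    · exact h1
    · exact absurd h2 (fun h2 => (hprime.dvd_mul.mp h2).elim hpg hph)
end

section
/- For a divisor d > 1 of n and 0 ≤ k ≤ n, each cyclotomic factor φ_d(q) appears in the Gaussian binomial coefficient [n choose k]_q with multiplicity at most 1. -/
open Polynomial Finset

/-- Cyclotomic factorization of the q-factorial. -/
lemma qFactorial_eq_prod (m n : ℕ) (hmn : m ≤ n) :
    qFactorial m = ∏ e ∈ Finset.Icc 2 n, (cyclotomic e ℚ) ^ (m / e) := by
  induction m with
  | zero => simp [qFactorial]
  | succ m ih =>
    have hm : m ≤ n := le_of_lt hmn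
    rw [qFactorial, Finset.prod_range_succ, ← qFactorial, ih hm]
    have hq : qAnalog (m + 1) = ∏ e ∈ (m + 1).divisors.erase 1, cyclotomic e ℚ :=
      (prod_cyclotomic_eq_geom_sum (Nat.succ_pos m) ℚ).symm
    have hset : (m + 1).divisors.erase 1 = (Finset.Icc 2 n).filter (· ∣ m + 1) := by
      ext e
      simp only [Finset.mem_erase, Nat.mem_divisors, Finset.mem_filter, Finset.mem_Icc]
      constructor
      · rintro ⟨h1, h2, -⟩
        have he1 : e ≤ m + 1 := Nat.le_of_dvd (Nat.succ_pos m) h2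
        have he0 : e ≠ 0 := by rintro rfl; exact absurd h2 (by simp)
        exact ⟨⟨by omega, le_trans he1 hmn⟩, h2⟩
      · rintro ⟨⟨h1, h2⟩, h3⟩
        exact ⟨by omega, h3, Nat.succ_ne_zero m⟩
    rw [hq, hset, Finset.prod_filter, ← Finset.prod_mul_distrib]
    apply Finset.prod_congr rfl
    intro e he
    rw [Nat.succ_div]
    split_ifs with h <;> simp [pow_add]

/-- For a divisor `d > 1` of `n` and `0 ≤ k ≤ n`, the cyclotomic factor `φ_d(q)` appears in
the Gaussian binomial coefficient `[n choose k]_q` with multiplicity at most 1. -/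
theorem stmt_1 (n d k : ℕ) (hdn : d ∣ n) (hd : 1 < d) (hk : k ≤ n) :
    ¬ (cyclotomic d ℚ) ^ 2 ∣ qBinom n k := by
  have hcirr : Irreducible (cyclotomic d ℚ) := cyclotomic.irreducible_rat (by omega)
  rcases Nat.eq_zero_or_pos n with rfl | hn
  · interval_cases k
    simp only [qBinom, qFactorial, Finset.range_zero, Finset.prod_empty, Nat.zero_sub, mul_one,
      divByMonic_one]
    intro h
    exact hcirr.not_isUnit (isUnit_of_dvd_one (dvd_trans ⟨cyclotomic d ℚ, (sq _)⟩ h))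
  have hdn' : d ≤ n := Nat.le_of_dvd hn hdn
  have hdmem : d ∈ Finset.Icc 2 n := Finset.mem_Icc.2 ⟨hd, hdn'⟩
  -- factorizations
  have hFn := qFactorial_eq_prod n n le_rfl
  have hFk := qFactorial_eq_prod k n hk
  have hFnk := qFactorial_eq_prod (n - k) n (Nat.sub_le n k)
  -- monicity of denominator
  have hmono : ∀ m, m ≤ n → (qFactorial m).Monic := by
    intro m hm
    rw [qFactorial_eq_prod m n hm]
    exact monic_prod_of_monic _ _ fun e _ => (cyclotomic.monic e ℚ).pow _
  have hden : (qFactorial k * qFactorial (n - k)).Monic :=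
    (hmono k hk).mul (hmono (n - k) (Nat.sub_le n k))
  -- denominator divides numerator
  have hdivexp : ∀ e, k / e + (n - k) / e ≤ n / e := by
    intro e
    rcases Nat.eq_zero_or_pos e with rfl | he; · simp
    rw [Nat.le_div_iff_mul_le he, Nat.add_mul]
    have h1 := Nat.div_mul_le_self k e
    have h2 := Nat.div_mul_le_self (n - k) e
    omega
  have hdvd : qFactorial k * qFactorial (n - k) ∣ qFactorial n := by
    rw [hFn, hFk, hFnk, ← Finset.prod_mul_distrib]
    refine Finset.prod_dvd_prod_of_dvd _ _ fun e _ => ?_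
    rw [← pow_add]
    exact pow_dvd_pow _ (hdivexp e)
  have heq : qFactorial n = (qFactorial k * qFactorial (n - k)) * qBinom n k := by
    conv_lhs => rw [← modByMonic_add_div (qFactorial n) (qFactorial k * qFactorial (n - k))]
    rw [(modByMonic_eq_zero_iff_dvd hden).2 hdvd, zero_add, qBinom]
  -- suppose the divisibility holds
  intro h
  -- then a high power of cyclotomic d divides qFactorial n
  have hbig : (cyclotomic d ℚ) ^ (n / d + 1) ∣ qFactorial n := by
    have h1 : (cyclotomic d ℚ) ^ (k / d) ∣ qFactorial k := by
      rw [hFk]; exact dvd_trans (pow_dvd_pow _ le_rfl) (Finset.dvd_prod_of_mem _ hdmem)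
    have h2 : (cyclotomic d ℚ) ^ ((n - k) / d) ∣ qFactorial (n - k) := by
      rw [hFnk]; exact Finset.dvd_prod_of_mem _ hdmem
    have h3 : (cyclotomic d ℚ) ^ (k / d + (n - k) / d + 2) ∣ qFactorial n := by
      rw [heq, pow_add, pow_add]
      exact mul_dvd_mul (mul_dvd_mul h1 h2) h
    refine dvd_trans (pow_dvd_pow _ ?_) h3
    -- arithmetic: since d ∣ n, k/d + (n-k)/d ≥ n/d - 1
    obtain ⟨N, rfl⟩ := hdn
    have e1 := Nat.div_add_mod k d
    have e2 := Nat.div_add_mod (d * N - k) d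
    have e3 : k % d < d := Nat.mod_lt _ (by omega)
    have e4 : (d * N - k) % d < d := Nat.mod_lt _ (by omega)
    have e5 : d * N / d = N := Nat.mul_div_cancel_left N (by omega)
    set a := k / d with ha
    set b := (d * N - k) / d with hb
    have h6 : d * a + d * b + (k % d + (d * N - k) % d) = d * N := by omega
    have h7 : d * N < d * (a + b + 2) := by
      have hx : d * (a + b + 2) = d * a + d * b + 2 * d := by ring
      omega
    have h8 : N < a + b + 2 := Nat.lt_of_mul_lt_mul_left h7
    rw [e5]
    omega
  -- but the multiplicity of cyclotomic d in qFactorial n is exactly n / d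
  rw [hFn, ← Finset.mul_prod_erase _ _ hdmem, pow_succ] at hbig
  have hc0 : (cyclotomic d ℚ) ^ (n / d) ≠ 0 := pow_ne_zero _ (cyclotomic_ne_zero d ℚ)
  have hdvdR : cyclotomic d ℚ ∣ ∏ e ∈ (Finset.Icc 2 n).erase d, (cyclotomic e ℚ) ^ (n / e) :=
    (mul_dvd_mul_iff_left hc0).1 hbig
  obtain ⟨e, he, hdvde⟩ := hcirr.prime.exists_mem_finset_dvd hdvdR
  have hne : e ≠ d := (Finset.mem_erase.1 he).1
  have : cyclotomic d ℚ ∣ cyclotomic e ℚ := hcirr.prime.dvd_of_dvd_pow hdvde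
  exact hcirr.not_isUnit ((cyclotomic.isCoprime_rat hne.symm).isUnit_of_dvd' dvd_rfl this)
end

section
/- Let R = ℚ[q^{±1}, t^{±1}], let n ≥ 1, and for each divisor d of n let J(n,k) denote the ideal of R generated by the Gaussian binomials [n choose n-d]_q for divisors d of n with d ≤ k. Then for k dividing n, J(n,k) is a principal ideal generated by p_{n,k}(q) = ∏_{d | n, d > k} φ_d(q). -/
open Polynomial Finset

/-- The ring `R = ℚ[q^{±1}, t^{±1}]`, modelled as Laurent polynomials in `t` with
coefficients Laurent polynomials in `q`. -/
noncomputable abbrev LaurentQT : Type := LaurentPolynomial (LaurentPolynomial ℚ)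

/-- The variable `q` of `R = ℚ[q^{±1}, t^{±1}]`. -/
noncomputable def qv : LaurentQT := LaurentPolynomial.C (LaurentPolynomial.T 1)

/-- The variable `t` of `R = ℚ[q^{±1}, t^{±1}]`. -/
noncomputable def tv : LaurentQT := LaurentPolynomial.T 1

namespace Stmt9

/-! ### Arithmetic of floor-division exponents -/

/-- The multiplicity of the `e`-th cyclotomic polynomial in `[n choose d]_q`. -/
def mu (n e d : ℕ) : ℕ := n / e - (n - d) / e - d / e

lemma div_add_div_le {a b e : ℕ} (he : 0 < e) : a / e + b / e ≤ (a + b) / e := by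
  rw [Nat.le_div_iff_mul_le he, add_mul]
  exact Nat.add_le_add (Nat.div_mul_le_self a e) (Nat.div_mul_le_self b e)

lemma mu_add {n e d : ℕ} (he : 0 < e) (hdn : d ≤ n) :
    n / e = (n - d) / e + d / e + mu n e d := by
  have h := div_add_div_le (a := n - d) (b := d) he
  rw [Nat.sub_add_cancel hdn] at h
  unfold mu; omega

lemma mu_pos {n e d : ℕ} (hdvd : e ∣ n) (hd : 0 < d) (hde : d < e) (hdn : d ≤ n) :
    1 ≤ mu n e d := by
  have he : 0 < e := lt_trans hd hde
  have h0 : d / e = 0 := Nat.div_eq_of_lt hde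
  have h1 : (n - d) / e < n / e := by
    rw [Nat.div_lt_iff_lt_mul he, Nat.div_mul_cancel hdvd]
    omega
  unfold mu; omega

lemma mu_self {n e : ℕ} (hdvd : e ∣ n) (he : 0 < e) (hen : e ≤ n) : mu n e e = 0 := by
  obtain ⟨m, rfl⟩ := hdvd
  have hm : 0 < m := by
    rcases Nat.eq_zero_or_pos m with h | h
    · subst h; omega
    · exact h
  have h1 : e * m / e = m := Nat.mul_div_cancel_left m he
  have h2 : (e * m - e) / e = m - 1 := by
    have : e * m - e = e * (m - 1) := by
      rw [Nat.mul_sub, mul_one]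
    rw [this, Nat.mul_div_cancel_left _ he]
  have h3 : e / e = 1 := Nat.div_self he
  unfold mu; omega

lemma mu_one {n e : ℕ} (h2 : 2 ≤ e) (hn : 0 < n) :
    mu n e 1 = if e ∣ n then 1 else 0 := by
  have h1 : 1 / e = 0 := Nat.div_eq_of_lt (by omega)
  have := (Nat.succ_div : (n - 1 + 1) / e = (n - 1) / e + if e ∣ n - 1 + 1 then 1 else 0)
  rw [Nat.sub_add_cancel hn] at this
  unfold mu; split_ifs at this ⊢ <;> omega

/-! ### Cyclotomic factorizations of q-analogs -/

lemma qAnalog_eq_prod {m : ℕ} (hm : 0 < m) :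
    qAnalog m = ∏ d ∈ m.divisors.erase 1, cyclotomic d ℚ := by
  have hX : (X - 1 : ℚ[X]) ≠ 0 := by
    intro h
    have := congrArg (Polynomial.eval 0) h
    simp at this
  apply mul_right_cancel₀ hX
  rw [qAnalog, geom_sum_mul, ← prod_cyclotomic_eq_X_pow_sub_one hm ℚ]
  have h1 : (1 : ℕ) ∈ m.divisors := Nat.one_mem_divisors.2 hm.ne'
  rw [← Finset.mul_prod_erase _ _ h1, cyclotomic_one, mul_comm]

lemma qAnalog_monic {m : ℕ} (hm : 0 < m) : (qAnalog m).Monic := by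
  rw [qAnalog_eq_prod hm]
  exact monic_prod_of_monic _ _ fun d _ => cyclotomic.monic d ℚ

lemma qFactorial_monic (m : ℕ) : (qFactorial m).Monic :=
  monic_prod_of_monic _ _ fun i _ => qAnalog_monic i.succ_pos

lemma filter_Icc_dvd {m n : ℕ} (hm : 0 < m) (hmn : m ≤ n) :
    (Finset.Icc 2 n).filter (fun e => e ∣ m) = m.divisors.erase 1 := by
  ext e
  simp only [Finset.mem_filter, Finset.mem_Icc, Finset.mem_erase, Nat.mem_divisors]
  constructor
  · rintro ⟨⟨h2, _⟩, hd⟩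
    exact ⟨by omega, hd, hm.ne'⟩
  · rintro ⟨h1, hd, _⟩
    have he1 : 1 ≤ e := Nat.pos_of_dvd_of_pos hd hm
    have := Nat.le_of_dvd hm hd
    exact ⟨⟨by omega, by omega⟩, hd⟩

lemma qFactorial_eq_prod {m n : ℕ} (hmn : m ≤ n) :
    qFactorial m = ∏ e ∈ Finset.Icc 2 n, cyclotomic e ℚ ^ (m / e) := by
  induction m with
  | zero => simp [qFactorial]
  | succ m ih =>
    have hm : m ≤ n := by omega
    rw [qFactorial, Finset.prod_range_succ, ← qFactorial, ih hm,
      qAnalog_eq_prod m.succ_pos, ← filter_Icc_dvd m.succ_pos hmn, Finset.prod_filter,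
      ← Finset.prod_mul_distrib]
    apply Finset.prod_congr rfl
    intro e _
    rw [Nat.succ_div]
    rw [pow_add, pow_ite, pow_one, pow_zero]

/-- The Gaussian binomial `[n choose d]_q`, written as an explicit product of cyclotomic
polynomials. -/
noncomputable def gB (n d : ℕ) : ℚ[X] :=
  ∏ e ∈ Finset.Icc 2 n, cyclotomic e ℚ ^ (mu n e d)

lemma qBinom_eq_gB {n d : ℕ} (hd : 0 < d) (hdn : d ≤ n) : qBinom n (n - d) = gB n d := by
  have key : qFactorial n = (qFactorial (n - d) * qFactorial d) * gB n d := by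
    rw [qFactorial_eq_prod (le_refl n), qFactorial_eq_prod (Nat.sub_le n d),
      qFactorial_eq_prod hdn, gB, ← Finset.prod_mul_distrib, ← Finset.prod_mul_distrib]
    apply Finset.prod_congr rfl
    intro e he
    rw [← pow_add, ← pow_add]
    congr 1
    have he2 : 2 ≤ e := (Finset.mem_Icc.1 he).1
    exact mu_add (by omega) hdn
  rw [qBinom, Nat.sub_sub_self hdn, key,
    mul_divByMonic_cancel_left _ ((qFactorial_monic (n - d)).mul (qFactorial_monic d))]

/-! ### The cofactor and its gcd -/

/-- The cofactor `[n choose d]_q / p_{n,k}(q)`. -/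
noncomputable def cof (n k d : ℕ) : ℚ[X] :=
  ∏ e ∈ Finset.Icc 2 n, cyclotomic e ℚ ^ (mu n e d - if e ∣ n ∧ k < e then 1 else 0)

lemma P_eq {n k : ℕ} (hn : 0 < n) (hk : 1 ≤ k) :
    (∏ d ∈ n.divisors.filter (fun d => k < d), cyclotomic d ℚ) =
      ∏ e ∈ Finset.Icc 2 n, cyclotomic e ℚ ^ (if e ∣ n ∧ k < e then 1 else 0) := by
  have hset : n.divisors.filter (fun d => k < d) =
      (Finset.Icc 2 n).filter (fun e => e ∣ n ∧ k < e) := by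
    ext e
    simp only [Finset.mem_filter, Nat.mem_divisors, Finset.mem_Icc]
    constructor
    · rintro ⟨⟨hd, _⟩, hke⟩
      exact ⟨⟨by omega, Nat.le_of_dvd hn hd⟩, hd, hke⟩
    · rintro ⟨_, hd, hke⟩
      exact ⟨⟨hd, hn.ne'⟩, hke⟩
  rw [hset, Finset.prod_filter]
  apply Finset.prod_congr rfl
  intro e _
  rw [pow_ite, pow_one, pow_zero]

lemma gB_factor {n k d : ℕ} (hn : 0 < n) (hk : 1 ≤ k) (hd : d ∣ n) (hd0 : 0 < d)
    (hdk : d ≤ k) :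
    gB n d = (∏ e ∈ n.divisors.filter (fun e => k < e), cyclotomic e ℚ) * cof n k d := by
  rw [P_eq hn hk, cof, gB, ← Finset.prod_mul_distrib]
  apply Finset.prod_congr rfl
  intro e he
  rw [← pow_add]
  congr 1
  split_ifs with h
  · have : 1 ≤ mu n e d := mu_pos h.1 hd0 (by omega) (Nat.le_of_dvd hn hd)
    omega
  · omega

lemma cyc_eq_of_dvd {a b : ℕ} (ha : 0 < a) (hb : 0 < b)
    (h : cyclotomic a ℚ ∣ cyclotomic b ℚ) : a = b := by
  have h1 := cyclotomic.irreducible_rat ha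
  have h2 := cyclotomic.irreducible_rat hb
  have := eq_of_monic_of_associated (cyclotomic.monic a ℚ) (cyclotomic.monic b ℚ)
    (h1.associated_of_dvd h2 h)
  exact cyclotomic_injective this

lemma not_cyc_dvd_cof {n k e : ℕ} (he2 : 2 ≤ e) (hen : e ≤ n) (hdvd : e ∣ n)
    (hek : e ≤ k) : ¬ cyclotomic e ℚ ∣ cof n k e := by
  intro hc
  have hprime : Prime (cyclotomic e ℚ) :=
    (cyclotomic.irreducible_rat (by omega : 0 < e)).prime
  obtain ⟨e', he'mem, hdvd'⟩ := hprime.exists_mem_finset_dvd hc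
  have he'2 : 2 ≤ e' := (Finset.mem_Icc.1 he'mem).1
  rcases Nat.eq_zero_or_pos (mu n e' e - if e' ∣ n ∧ k < e' then 1 else 0) with h0 | h0
  · rw [h0, pow_zero] at hdvd'
    exact hprime.not_unit (isUnit_of_dvd_one hdvd')
  · have heq : e = e' := cyc_eq_of_dvd (by omega) (by omega)
      (hprime.dvd_of_dvd_pow hdvd')
    subst heq
    rw [mu_self hdvd (by omega) hen] at h0
    omega

lemma cof_dvd_cyc {n k : ℕ} (hn : 0 < n) {π : ℚ[X]} (hπ : Prime π)
    (h : π ∣ cof n k 1) : ∃ e, 2 ≤ e ∧ e ≤ n ∧ e ∣ n ∧ e ≤ k ∧ π ∣ cyclotomic e ℚ := by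
  obtain ⟨e, hemem, hdvd⟩ := hπ.exists_mem_finset_dvd h
  have he2 : 2 ≤ e := (Finset.mem_Icc.1 hemem).1
  have hen : e ≤ n := (Finset.mem_Icc.1 hemem).2
  rcases Nat.eq_zero_or_pos (mu n e 1 - if e ∣ n ∧ k < e then 1 else 0) with h0 | h0
  · rw [h0, pow_zero] at hdvd
    exact absurd (isUnit_of_dvd_one hdvd) hπ.not_unit
  · have hμ := mu_one he2 hn
    by_cases hd : e ∣ n
    · refine ⟨e, he2, hen, hd, ?_, hπ.dvd_of_dvd_pow hdvd⟩
      by_contra hke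
      rw [if_pos hd] at hμ
      rw [if_pos ⟨hd, by omega⟩, hμ] at h0
      omega
    · rw [if_neg hd] at hμ
      rw [hμ] at h0
      simp at h0

lemma gcd_cof_eq_one {n k : ℕ} (hn : 0 < n) (hk : 1 ≤ k) :
    (n.divisors.filter (fun d => d ≤ k)).gcd (cof n k) = 1 := by
  set D : Finset ℕ := n.divisors.filter (fun d => d ≤ k) with hD
  have h1mem : 1 ∈ D := by
    simp [hD, Nat.mem_divisors, hn.ne', hk]
  rw [← Finset.normalize_gcd, normalize_eq_one]
  by_contra hu
  have hc1 : cof n k 1 ≠ 0 := by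
    rw [cof]
    apply Finset.prod_ne_zero_iff.2
    intro e he
    exact pow_ne_zero _ (cyclotomic_ne_zero e ℚ)
  have hgne : D.gcd (cof n k) ≠ 0 := fun h =>
    hc1 (zero_dvd_iff.1 (h ▸ Finset.gcd_dvd h1mem))
  obtain ⟨π, hπirr, hπdvd⟩ := WfDvdMonoid.exists_irreducible_factor hu hgne
  have hπ : Prime π := hπirr.prime
  obtain ⟨e, he2, hen, hedvd, hek, hπe⟩ :=
    cof_dvd_cyc hn hπ (hπdvd.trans (Finset.gcd_dvd h1mem))
  have hemem : e ∈ D := by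
    simp [hD, Nat.mem_divisors, hn.ne', hedvd, hek]
  have hassoc : Associated π (cyclotomic e ℚ) :=
    hπirr.associated_of_dvd (cyclotomic.irreducible_rat (by omega)) hπe
  have : cyclotomic e ℚ ∣ cof n k e :=
    (hassoc.symm.dvd.trans hπdvd).trans (Finset.gcd_dvd hemem)
  exact not_cyc_dvd_cof he2 hen hedvd hek this

/-! ### Span of a finite family equals span of its gcd -/

lemma span_image_eq_span_gcd {β : Type*} [DecidableEq β] (s : Finset β) (f : β → ℚ[X]) :
    Ideal.span ↑(s.image f) = Ideal.span {s.gcd f} := by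
  induction s using Finset.induction_on with
  | empty => simp [Ideal.span_singleton_eq_bot.2 rfl]
  | insert a s hnotmem ih =>
    rw [Finset.image_insert, Finset.coe_insert, Ideal.span_insert, ih, Finset.gcd_insert,
      span_gcd, Ideal.span_insert]

/-! ### The main statement over `ℚ[q]` -/

lemma main_poly (n k : ℕ) (hn : 0 < n) (hk : k ∣ n) :
    Ideal.span ((fun d => qBinom n (n - d)) '' {d : ℕ | d ∣ n ∧ d ≤ k}) =
      Ideal.span {∏ d ∈ n.divisors.filter (fun d => k < d), cyclotomic d ℚ} := by
  have hk1 : 1 ≤ k := Nat.pos_of_dvd_of_pos hk hn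
  set D : Finset ℕ := n.divisors.filter (fun d => d ≤ k) with hD
  have hset : {d : ℕ | d ∣ n ∧ d ≤ k} = ↑D := by
    ext d
    simp [hD, Nat.mem_divisors, hn.ne']
  rw [hset, ← Finset.coe_image, span_image_eq_span_gcd]
  have hgcd : D.gcd (fun d => qBinom n (n - d)) =
      ∏ d ∈ n.divisors.filter (fun d => k < d), cyclotomic d ℚ := by
    have hcongr : ∀ d ∈ D, qBinom n (n - d) =
        (∏ e ∈ n.divisors.filter (fun e => k < e), cyclotomic e ℚ) * cof n k d := by
      intro d hd
      simp only [hD, Finset.mem_filter, Nat.mem_divisors] at hd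
      have hd0 : 0 < d := Nat.pos_of_dvd_of_pos hd.1.1 hn
      rw [qBinom_eq_gB hd0 (Nat.le_of_dvd hn hd.1.1),
        gB_factor hn hk1 hd.1.1 hd0 hd.2]
    rw [Finset.gcd_congr rfl hcongr, Finset.gcd_mul_left, gcd_cof_eq_one hn hk1, mul_one]
    exact (monic_prod_of_monic _ _ fun e _ => cyclotomic.monic e ℚ).normalize_eq_self
  rw [hgcd]

end Stmt9

/-- For `k ∣ n`, the ideal `J(n,k)` of `R = ℚ[q^{±1},t^{±1}]` generated by the Gaussian
binomials `[n choose n-d]_q` for divisors `d` of `n` with `d ≤ k` is principal, generated by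
`p_{n,k}(q) = ∏_{d ∣ n, d > k} φ_d(q)`. -/
theorem stmt_9 (n k : ℕ) (hn : 0 < n) (hk : k ∣ n) :
    Ideal.span ((fun d => (aeval qv (qBinom n (n - d)) : LaurentQT)) ''
        {d : ℕ | d ∣ n ∧ d ≤ k}) =
      Ideal.span {(aeval qv (∏ d ∈ n.divisors.filter (fun d => k < d), cyclotomic d ℚ) :
        LaurentQT)} := by
  have h1 : (fun d => (aeval qv (qBinom n (n - d)) : LaurentQT)) '' {d : ℕ | d ∣ n ∧ d ≤ k} =
      ⇑(aeval qv : ℚ[X] →ₐ[ℚ] LaurentQT) ''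
        ((fun d => qBinom n (n - d)) '' {d : ℕ | d ∣ n ∧ d ≤ k}) := by
    rw [Set.image_image]
  rw [h1, ← Ideal.map_span (aeval qv : ℚ[X] →ₐ[ℚ] LaurentQT),
    Stmt9.main_poly n k hn hk, Ideal.map_span, Set.image_singleton]
end

section
/- The group G_{B_n} (Artin group of type B_n) is isomorphic to the semidirect product G_{Ã_{n-1}} ⋊ ℤ, where G_{Ã_{n-1}} is the Artin group of affine type Ã_{n-1}; equivalently, G_{B_n} admits the presentation with generators τ, ε_1, ..., ε_n and relations ε_i ε_j = ε_j ε_i for nonadjacent indices mod n, ε_i ε_{i+1} ε_i = ε_{i+1} ε_i ε_{i+1} (indices mod n), and τ^{-1} ε_i τ = ε_{i+1} (indices mod n). -/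
open FreeGroup

/-- The defining relations of the Artin group of type `Bₙ` on generators
`ε_1, …, ε_{n-1}, ε̄_n` (indexed by `Fin n`; the last index corresponds to `ε̄_n`):
braid relations of length 3 for consecutive generators among the first `n-1`, the braid
relation of length 4 between `ε_{n-1}` and `ε̄_n`, and commutations otherwise. -/
def artinBRels (n : ℕ) : Set (FreeGroup (Fin n)) :=
  {r | ∃ i j : Fin n, (i : ℕ) + 1 = (j : ℕ) ∧ (j : ℕ) < n - 1 ∧
      r = of i * of j * of i * (of j * of i * of j)⁻¹} ∪
  {r | ∃ i j : Fin n, (i : ℕ) + 1 = (j : ℕ) ∧ (j : ℕ) = n - 1 ∧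
      r = of i * of j * of i * of j * (of j * of i * of j * of i)⁻¹} ∪
  {r | ∃ i j : Fin n, (i : ℕ) + 1 < (j : ℕ) ∧ r = of i * of j * (of j * of i)⁻¹}

/-- The Artin group `G_{Bₙ}`. -/
def ArtinB (n : ℕ) : Type := PresentedGroup (artinBRels n)

instance (n : ℕ) : Group (ArtinB n) := by unfold ArtinB; infer_instance

/-- The defining relations of the affine Artin group `G_{Ã_{n-1}}`: its `n` generators are
arranged in a cycle (indexed by `Fin n` with its cyclic addition), with braid relations
between cyclically adjacent generators and commutation relations otherwise. -/
def artinAffARels (n : ℕ) [NeZero n] : Set (FreeGroup (Fin n)) :=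
  {r | ∃ i : Fin n, r = of i * of (i + 1) * of i * (of (i + 1) * of i * of (i + 1))⁻¹} ∪
  {r | ∃ i j : Fin n, i ≠ j ∧ j ≠ i + 1 ∧ i ≠ j + 1 ∧ r = of i * of j * (of j * of i)⁻¹}

/-- The affine Artin group `G_{Ã_{n-1}}`. -/
def ArtinAffA (n : ℕ) [NeZero n] : Type := PresentedGroup (artinAffARels n)

instance (n : ℕ) [NeZero n] : Group (ArtinAffA n) := by unfold ArtinAffA; infer_instance

/-- The Peifer presentation of `G_{Bₙ}`: generators `ε_1, …, ε_n` (the `Sum.inl` part,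
indexed cyclically by `Fin n`) and `τ` (the `Sum.inr` part), with relations
`ε_i ε_j = ε_j ε_i` for non-adjacent indices mod `n`,
`ε_i ε_{i+1} ε_i = ε_{i+1} ε_i ε_{i+1}` (indices mod `n`), and
`τ⁻¹ ε_i τ = ε_{i+1}` (indices mod `n`). -/
def peiferRels (n : ℕ) [NeZero n] : Set (FreeGroup (Fin n ⊕ Unit)) :=
  {r | ∃ i : Fin n, r = of (Sum.inl i) * of (Sum.inl (i + 1)) * of (Sum.inl i) *
      (of (Sum.inl (i + 1)) * of (Sum.inl i) * of (Sum.inl (i + 1)))⁻¹} ∪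
  {r | ∃ i j : Fin n, i ≠ j ∧ j ≠ i + 1 ∧ i ≠ j + 1 ∧
      r = of (Sum.inl i) * of (Sum.inl j) * (of (Sum.inl j) * of (Sum.inl i))⁻¹} ∪
  {r | ∃ i : Fin n, r = (of (Sum.inr ()))⁻¹ * of (Sum.inl i) * of (Sum.inr ()) *
      (of (Sum.inl (i + 1)))⁻¹}

namespace Stmt16Aux

open scoped Fin.NatCast Fin.CommRing

variable {G : Type*} [Group G]

/-- Descending product `x (k-1) * ⋯ * x 0`. -/
def Qp (x : ℕ → G) : ℕ → G
  | 0 => 1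
  | k+1 => x k * Qp x k

@[simp] lemma Qp_zero (x : ℕ → G) : Qp x 0 = 1 := rfl
lemma Qp_succ (x : ℕ → G) (k : ℕ) : Qp x (k+1) = x k * Qp x k := rfl

section Calc

variable (x : ℕ → G) (Mb Mc : ℕ)
variable (hb : ∀ i, i + 2 ≤ Mb → x i * x (i+1) * x i = x (i+1) * x i * x (i+1))
variable (hc : ∀ i j, i + 1 < j → j < Mc → x i * x j = x j * x i)

include hc in
lemma commQ : ∀ k j, k < j → j < Mc → x j * Qp x k = Qp x k * x j := by
  intro k
  induction k with
  | zero => intro j _ _; simp [Qp]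
  | succ k ih =>
    intro j hk hj
    rw [Qp_succ x k]
    have h1 : x k * x j = x j * x k := hc k j hk hj
    have h2 : x j * Qp x k = Qp x k * x j := ih j (by omega) hj
    set a := x k
    set b := x j
    set Q := Qp x k
    calc b * (a * Q) = (b * a) * Q := by group
      _ = (a * b) * Q := by rw [← h1]
      _ = a * (b * Q) := by group
      _ = a * (Q * b) := by rw [h2]
      _ = (a * Q) * b := by group

include hb hc in
lemma stepQ : ∀ m i, i + 2 ≤ m → m ≤ Mc → i + 2 ≤ Mb →
    x i * Qp x m = Qp x m * x (i+1) := by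
  intro m
  induction m with
  | zero => omega
  | succ m ih =>
    intro i him hm hib
    rcases Nat.lt_or_ge (i+2) (m+1) with hlt | hge
    · rw [Qp_succ x m]
      have h1 : x i * x m = x m * x i := hc i m (by omega) (by omega)
      have h2 : x i * Qp x m = Qp x m * x (i+1) := ih i (by omega) (by omega) hib
      set a := x i
      set b := x m
      set c := x (i+1)
      set Q := Qp x m
      calc a * (b * Q) = (a * b) * Q := by group
        _ = (b * a) * Q := by rw [h1]
        _ = b * (a * Q) := by group
        _ = b * (Q * c) := by rw [h2]
        _ = (b * Q) * c := by group
    · have hm1 : m = i + 1 := by omega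
      subst hm1
      rw [Qp_succ x (i+1), Qp_succ x i]
      have hbr := hb i hib
      have hcm : x (i+1) * Qp x i = Qp x i * x (i+1) :=
        commQ x Mc hc i (i+1) (by omega) (by omega)
      set a := x i
      set b := x (i+1)
      set Q := Qp x i
      calc a * (b * (a * Q)) = (a * b * a) * Q := by group
        _ = (b * a * b) * Q := by rw [hbr]
        _ = (b * a) * (b * Q) := by group
        _ = (b * a) * (Q * b) := by rw [hcm]
        _ = (b * (a * Q)) * b := by group

include hb hc in
lemma LQ : ∀ k, k + 2 ≤ Mb → k + 2 ≤ Mc →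
    x (k+1) * (Qp x (k+1) * (x (k+1) * Qp x (k+1)))
      = (Qp x (k+1) * (x (k+1) * Qp x (k+1))) * x 0 := by
  intro k
  induction k with
  | zero =>
    intro hb2 _
    have hbr := hb 0 hb2
    rw [Qp_succ x 0, Qp_zero, mul_one]
    set a := x 0
    set b := x 1
    calc b * (a * (b * a)) = (b * a * b) * a := by group
      _ = (a * b * a) * a := by rw [← hbr]
      _ = (a * (b * a)) * a := by group
  | succ k ih =>
    intro hb2 hc2
    rw [Qp_succ x (k+1)]
    have hbr := hb (k+1) hb2
    have hcm : x (k+1+1) * Qp x (k+1) = Qp x (k+1) * x (k+1+1) :=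
      commQ x Mc hc (k+1) (k+1+1) (by omega) (by omega)
    have ihh := ih (by omega) (by omega)
    set a := x (k+1)
    set b := x (k+1+1)
    set z := x 0
    set Q := Qp x (k+1)
    calc b * ((a * Q) * (b * (a * Q)))
        = (b * a) * (Q * b) * (a * Q) := by group
      _ = (b * a) * (b * Q) * (a * Q) := by rw [← hcm]
      _ = (b * a * b) * (Q * (a * Q)) := by group
      _ = (a * b * a) * (Q * (a * Q)) := by rw [← hbr]
      _ = (a * b) * (a * (Q * (a * Q))) := by group
      _ = (a * b) * ((Q * (a * Q)) * z) := by rw [ihh]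
      _ = a * ((b * Q) * ((a * Q) * z)) := by group
      _ = a * ((Q * b) * ((a * Q) * z)) := by rw [hcm]
      _ = ((a * Q) * (b * (a * Q))) * z := by group

end Calc

/- ### generic helpers -/

lemma relOne {α : Type*} {rels : Set (FreeGroup α)} {r : FreeGroup α} (h : r ∈ rels) :
    PresentedGroup.mk rels r = 1 :=
  (QuotientGroup.eq_one_iff r).mpr (Subgroup.subset_normalClosure h)

lemma mk_of {α : Type*} {rels : Set (FreeGroup α)} (x : α) :
    PresentedGroup.mk rels (FreeGroup.of x) = PresentedGroup.of x := rfl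

lemma valcast {n : ℕ} [NeZero n] {i : ℕ} (h : i < n) : ((i : Fin n) : ℕ) = i := by
  rw [Fin.val_natCast]; exact Nat.mod_eq_of_lt h

lemma castsucc {n : ℕ} [NeZero n] (i : ℕ) : ((i+1 : ℕ) : Fin n) = (i : Fin n) + 1 := by
  push_cast; ring

lemma conj_braid {u p q : G} (h : p*q*p = q*p*q) :
    (u⁻¹*p*u)*(u⁻¹*q*u)*(u⁻¹*p*u) = (u⁻¹*q*u)*(u⁻¹*p*u)*(u⁻¹*q*u) := by
  calc (u⁻¹*p*u)*(u⁻¹*q*u)*(u⁻¹*p*u) = u⁻¹*(p*q*p)*u := by group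
    _ = u⁻¹*(q*p*q)*u := by rw [h]
    _ = (u⁻¹*q*u)*(u⁻¹*p*u)*(u⁻¹*q*u) := by group

lemma conj_comm' {u p q : G} (h : p*q = q*p) :
    (u⁻¹*p*u)*(u⁻¹*q*u) = (u⁻¹*q*u)*(u⁻¹*p*u) := by
  calc (u⁻¹*p*u)*(u⁻¹*q*u) = u⁻¹*(p*q)*u := by group
    _ = u⁻¹*(q*p)*u := by rw [h]
    _ = (u⁻¹*q*u)*(u⁻¹*p*u) := by group

lemma semiconj_inv {w p q : G} (h : p * w = w * q) : q * w⁻¹ = w⁻¹ * p := by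
  apply mul_left_cancel (a := w)
  calc w * (q * w⁻¹) = (w * q) * w⁻¹ := by group
    _ = (p * w) * w⁻¹ := by rw [← h]
    _ = w * (w⁻¹ * p) := by group

lemma shift_rel_one {A x y : G} (h : x * A = A * y) : A⁻¹ * x * A * y⁻¹ = 1 := by
  have h2 : A⁻¹ * (x * A) * y⁻¹ = 1 := by rw [h]; group
  calc A⁻¹ * x * A * y⁻¹ = A⁻¹ * (x * A) * y⁻¹ := by group
    _ = 1 := h2

lemma shift_rel_one' {A x y : G} (h : A⁻¹ * x * A * y⁻¹ = 1) : x * A = A * y := by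
  have h2 : A⁻¹ * x * A = y := by
    have := mul_inv_eq_one.mp h
    exact this
  calc x * A = A * (A⁻¹ * x * A) := by group
    _ = A * y := by rw [h2]

lemma key4 {a c t Q z : G} (hs1 : a*t = t*c) (hs2 : c*t = t*z)
    (hq : Q * t = t * (a * Q * z⁻¹))
    (hL : a * (Q * (a * Q)) = (Q * (a * Q)) * z) :
    a * (t * (a*Q)⁻¹) * a * (t * (a*Q)⁻¹) = t * (a*Q)⁻¹ * a * (t * (a*Q)⁻¹) * a := by
  have hq' : Q⁻¹ * t = t * (z * (Q⁻¹ * a⁻¹)) := by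
    calc Q⁻¹ * t = Q⁻¹ * (t * (a * Q * z⁻¹)) * (z * (Q⁻¹ * a⁻¹)) := by group
      _ = Q⁻¹ * (Q * t) * (z * (Q⁻¹ * a⁻¹)) := by rw [← hq]
      _ = t * (z * (Q⁻¹ * a⁻¹)) := by group
  have hL' : z * (Q⁻¹ * (a⁻¹ * Q⁻¹)) = Q⁻¹ * (a⁻¹ * Q⁻¹) * a := by
    apply mul_left_cancel (a := Q * (a * Q))
    calc (Q * (a * Q)) * (z * (Q⁻¹ * (a⁻¹ * Q⁻¹)))
        = ((Q * (a * Q)) * z) * (Q⁻¹ * (a⁻¹ * Q⁻¹)) := by group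
      _ = (a * (Q * (a * Q))) * (Q⁻¹ * (a⁻¹ * Q⁻¹)) := by rw [← hL]
      _ = (Q * (a * Q)) * (Q⁻¹ * (a⁻¹ * Q⁻¹) * a) := by group
  calc a * (t * (a*Q)⁻¹) * a * (t * (a*Q)⁻¹)
      = a * (t * ((Q⁻¹ * t) * (Q⁻¹ * a⁻¹))) := by group
    _ = a * (t * ((t * (z * (Q⁻¹ * a⁻¹))) * (Q⁻¹ * a⁻¹))) := by rw [hq']
    _ = (a * t) * (t * (z * (Q⁻¹ * (a⁻¹ * (Q⁻¹ * a⁻¹))))) := by group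
    _ = (t * c) * (t * (z * (Q⁻¹ * (a⁻¹ * (Q⁻¹ * a⁻¹))))) := by rw [hs1]
    _ = t * (c * t) * (z * (Q⁻¹ * (a⁻¹ * (Q⁻¹ * a⁻¹)))) := by group
    _ = t * (t * z) * (z * (Q⁻¹ * (a⁻¹ * (Q⁻¹ * a⁻¹)))) := by rw [hs2]
    _ = t * t * z * (z * (Q⁻¹ * (a⁻¹ * Q⁻¹))) * a⁻¹ := by group
    _ = t * t * z * (Q⁻¹ * (a⁻¹ * Q⁻¹) * a) * a⁻¹ := by rw [hL']
    _ = t * (t * (z * (Q⁻¹ * a⁻¹))) * Q⁻¹ := by group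
    _ = t * (Q⁻¹ * t) * Q⁻¹ := by rw [← hq']
    _ = t * (a*Q)⁻¹ * a * (t * (a*Q)⁻¹) * a := by group

end Stmt16Aux
namespace Stmt16Aux

open scoped Fin.NatCast Fin.CommRing

section Bside
variable (m : ℕ)

/- ### The type-B side -/

def bB : ℕ → PresentedGroup (artinBRels (m+3)) :=
  fun i => PresentedGroup.of ((i : Fin (m+3)))

lemma relB_braid (i : ℕ) (hi : i + 2 ≤ m + 2) :
    bB m i * bB m (i+1) * bB m i = bB m (i+1) * bB m i * bB m (i+1) := by
  have hmem : (FreeGroup.of ((i : Fin (m+3))) * FreeGroup.of ((i+1 : ℕ) : Fin (m+3)) *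
      FreeGroup.of ((i : Fin (m+3))) *
      (FreeGroup.of ((i+1 : ℕ) : Fin (m+3)) * FreeGroup.of ((i : Fin (m+3))) *
        FreeGroup.of ((i+1 : ℕ) : Fin (m+3)))⁻¹) ∈ artinBRels (m+3) := by
    refine Or.inl (Or.inl ⟨_, _, ?_, ?_, rfl⟩)
    · rw [valcast (by omega), valcast (by omega)]
    · rw [valcast (by omega)]; omega
  have h := relOne hmem
  simp only [_root_.map_mul, _root_.map_inv, mk_of, mul_inv_eq_one] at h
  exact h

lemma relB_comm (i j : ℕ) (h1 : i + 1 < j) (h2 : j < m + 3) :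
    bB m i * bB m j = bB m j * bB m i := by
  have hmem : (FreeGroup.of ((i : Fin (m+3))) * FreeGroup.of ((j : Fin (m+3))) *
      (FreeGroup.of ((j : Fin (m+3))) * FreeGroup.of ((i : Fin (m+3))))⁻¹) ∈
      artinBRels (m+3) := by
    refine Or.inr ⟨_, _, ?_, rfl⟩
    rw [valcast (by omega), valcast h2]; omega
  have h := relOne hmem
  simp only [_root_.map_mul, _root_.map_inv, mk_of, mul_inv_eq_one] at h
  exact h

lemma relB_four :
    bB m (m+1) * bB m (m+2) * bB m (m+1) * bB m (m+2)
      = bB m (m+2) * bB m (m+1) * bB m (m+2) * bB m (m+1) := by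
  have hmem : (FreeGroup.of ((m+1 : ℕ) : Fin (m+3)) * FreeGroup.of ((m+2 : ℕ) : Fin (m+3)) *
      FreeGroup.of ((m+1 : ℕ) : Fin (m+3)) * FreeGroup.of ((m+2 : ℕ) : Fin (m+3)) *
      (FreeGroup.of ((m+2 : ℕ) : Fin (m+3)) * FreeGroup.of ((m+1 : ℕ) : Fin (m+3)) *
       FreeGroup.of ((m+2 : ℕ) : Fin (m+3)) * FreeGroup.of ((m+1 : ℕ) : Fin (m+3)))⁻¹) ∈
      artinBRels (m+3) := by
    refine Or.inl (Or.inr ⟨_, _, ?_, ?_, rfl⟩)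
    · rw [valcast (by omega), valcast (by omega)]
    · rw [valcast (by omega)]; omega
  have h := relOne hmem
  simp only [_root_.map_mul, _root_.map_inv, mk_of, mul_inv_eq_one] at h
  exact h

lemma bB_wrap : bB m (m+3) = bB m 0 := by
  unfold bB
  rw [Fin.natCast_self, Nat.cast_zero]

def τB : PresentedGroup (artinBRels (m+3)) := Qp (bB m) (m+3)

def εB : PresentedGroup (artinBRels (m+3)) := (τB m)⁻¹ * bB m (m+1) * τB m

lemma BA (i : ℕ) (hi : i + 2 ≤ m + 2) : bB m i * τB m = τB m * bB m (i+1) :=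
  stepQ (bB m) (m+2) (m+3) (relB_braid m) (relB_comm m) (m+3) i (by omega) (le_refl _) hi

lemma BL : bB m (m+1) * (Qp (bB m) (m+1) * (bB m (m+1) * Qp (bB m) (m+1)))
    = (Qp (bB m) (m+1) * (bB m (m+1) * Qp (bB m) (m+1))) * bB m 0 :=
  LQ (bB m) (m+2) (m+3) (relB_braid m) (relB_comm m) m (le_refl _) (by omega)

lemma BB : bB m (m+1) * (τB m * τB m) = (τB m * τB m) * bB m 0 := by
  have h4 := relB_four m
  have hq : bB m (m+2) * Qp (bB m) (m+1) = Qp (bB m) (m+1) * bB m (m+2) :=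
    commQ (bB m) (m+3) (relB_comm m) (m+1) (m+2) (by omega) (by omega)
  have hl := BL m
  have hτ : τB m = bB m (m+2) * (bB m (m+1) * Qp (bB m) (m+1)) := rfl
  rw [hτ]
  set a := bB m (m+1)
  set c := bB m (m+2)
  set z := bB m 0
  set Q := Qp (bB m) (m+1)
  calc a * ((c * (a * Q)) * (c * (a * Q)))
      = (a * c * a) * (Q * c) * (a * Q) := by group
    _ = (a * c * a) * (c * Q) * (a * Q) := by rw [← hq]
    _ = (a * c * a * c) * (Q * (a * Q)) := by group
    _ = (c * a * c * a) * (Q * (a * Q)) := by rw [h4]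
    _ = (c * a * c) * (a * (Q * (a * Q))) := by group
    _ = (c * a * c) * ((Q * (a * Q)) * z) := by rw [hl]
    _ = (c * a) * (c * Q) * (a * Q) * z := by group
    _ = (c * a) * (Q * c) * (a * Q) * z := by rw [hq]
    _ = ((c * (a * Q)) * (c * (a * Q))) * z := by group

lemma BBε : εB m * τB m = τB m * bB m 0 := by
  have h := BB m
  calc εB m * τB m = (τB m)⁻¹ * (bB m (m+1) * (τB m * τB m)) := by unfold εB; group
    _ = (τB m)⁻¹ * ((τB m * τB m) * bB m 0) := by rw [h]
    _ = τB m * bB m 0 := by group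

lemma hεB : εB m = τB m * bB m 0 * (τB m)⁻¹ :=
  eq_mul_inv_iff_mul_eq.mpr (BBε m)

/- ### the cyclic family `e` in the type-B group -/

def eB : ℕ → PresentedGroup (artinBRels (m+3)) :=
  fun k => if k % (m+3) = m+2 then εB m else bB m k

lemma eB_eq_b (k : ℕ) (h1 : k < m+3) (h2 : k ≠ m+2) : eB m k = bB m k := by
  unfold eB; rw [Nat.mod_eq_of_lt h1, if_neg h2]

lemma eB_last : eB m (m+2) = εB m := by
  unfold eB; rw [Nat.mod_eq_of_lt (by omega), if_pos rfl]

lemma eB_wrap : eB m (m+3) = bB m 0 := by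
  unfold eB
  rw [Nat.mod_self, if_neg (by omega), bB_wrap]

lemma eB_mod (k : ℕ) : eB m (k % (m+3)) = eB m k := by
  unfold eB
  rw [Nat.mod_mod_of_dvd k dvd_rfl]
  rcases em (k % (m+3) = m+2) with h | h
  · rw [if_pos h, if_pos h]
  · rw [if_neg h, if_neg h]
    unfold bB
    congr 1
    apply Fin.ext
    rw [Fin.val_natCast, Fin.val_natCast, Nat.mod_mod_of_dvd k dvd_rfl]

lemma E3 (i : ℕ) (hi : i ≤ m+2) : eB m i * τB m = τB m * eB m (i+1) := by
  rcases Nat.lt_or_ge i (m+1) with h | h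
  · rw [eB_eq_b m i (by omega) (by omega), eB_eq_b m (i+1) (by omega) (by omega)]
    exact BA m i (by omega)
  · rcases Nat.lt_or_ge i (m+2) with h' | h'
    · have : i = m+1 := by omega
      subst this
      rw [eB_eq_b m (m+1) (by omega) (by omega), (show eB m (m+1+1) = εB m from eB_last m)]
      unfold εB; group
    · have : i = m+2 := by omega
      subst this
      rw [eB_last, (show eB m (m+2+1) = bB m 0 from eB_wrap m)]
      exact BBε m

lemma E1 (i : ℕ) (hi : i ≤ m+2) :
    eB m i * eB m (i+1) * eB m i = eB m (i+1) * eB m i * eB m (i+1) := by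
  rcases Nat.lt_or_ge i (m+1) with h | h
  · rw [eB_eq_b m i (by omega) (by omega), eB_eq_b m (i+1) (by omega) (by omega)]
    exact relB_braid m i (by omega)
  · rcases Nat.lt_or_ge i (m+2) with h' | h'
    · have : i = m+1 := by omega
      subst this
      rw [eB_eq_b m (m+1) (by omega) (by omega), (show eB m (m+1+1) = εB m from eB_last m)]
      have h1 : (τB m)⁻¹ * bB m m * τB m = bB m (m+1) := by
        rw [mul_assoc, BA m m (by omega)]; group
      have h2 : (τB m)⁻¹ * bB m (m+1) * τB m = εB m := rfl
      have h3 := conj_braid (u := τB m) (relB_braid m m (by omega))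
      rw [h1, h2] at h3
      exact h3
    · have : i = m+2 := by omega
      subst this
      rw [eB_last, (show eB m (m+2+1) = bB m 0 from eB_wrap m)]
      have h1 : ((τB m)⁻¹)⁻¹ * bB m 0 * (τB m)⁻¹ = εB m := by
        rw [inv_inv]; exact (hεB m).symm
      have hBA0 : bB m 0 * τB m = τB m * bB m 1 := BA m 0 (by omega)
      have h2 : ((τB m)⁻¹)⁻¹ * bB m 1 * (τB m)⁻¹ = bB m 0 := by
        rw [inv_inv, ← hBA0]; group
      have hbr : bB m 0 * bB m 1 * bB m 0 = bB m 1 * bB m 0 * bB m 1 :=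
        relB_braid m 0 (by omega)
      have h3 := conj_braid (u := (τB m)⁻¹) hbr
      rw [h1, h2] at h3
      exact h3

lemma E2 (i j : ℕ) (hij : i < j) (hj : j ≤ m+2) (hne : j ≠ i+1)
    (hcyc : ¬(i = 0 ∧ j = m+2)) : eB m i * eB m j = eB m j * eB m i := by
  rcases Nat.lt_or_ge j (m+2) with h | h
  · rw [eB_eq_b m i (by omega) (by omega), eB_eq_b m j (by omega) (by omega)]
    exact relB_comm m i j (by omega) (by omega)
  · have hj2 : j = m+2 := by omega
    subst hj2
    have hi1 : 1 ≤ i := by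
      rcases Nat.eq_zero_or_pos i with h0 | h0
      · exact absurd ⟨h0, rfl⟩ hcyc
      · omega
    have hi2 : i ≤ m := by omega
    rw [eB_eq_b m i (by omega) (by omega), eB_last]
    have h1 : ((τB m)⁻¹)⁻¹ * bB m (i+1) * (τB m)⁻¹ = bB m i := by
      rw [inv_inv, ← BA m i (by omega)]; group
    have h2 : ((τB m)⁻¹)⁻¹ * bB m 0 * (τB m)⁻¹ = εB m := by
      rw [inv_inv]; exact (hεB m).symm
    have hcm : bB m (i+1) * bB m 0 = bB m 0 * bB m (i+1) :=
      (relB_comm m 0 (i+1) (by omega) (by omega)).symm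
    have h3 := conj_comm' (u := (τB m)⁻¹) hcm
    rw [h1, h2] at h3
    exact h3

end Bside
end Stmt16Aux
namespace Stmt16Aux

open scoped Fin.NatCast Fin.CommRing

section Pside
variable (m : ℕ)

def tP : PresentedGroup (peiferRels (m+3)) := PresentedGroup.of (Sum.inr ())

def EPf : Fin (m+3) → PresentedGroup (peiferRels (m+3)) :=
  fun i => PresentedGroup.of (Sum.inl i)

def EP : ℕ → PresentedGroup (peiferRels (m+3)) := fun k => EPf m ((k : Fin (m+3)))

lemma relP_braidFin (i : Fin (m+3)) :
    EPf m i * EPf m (i+1) * EPf m i = EPf m (i+1) * EPf m i * EPf m (i+1) := by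
  have h := relOne (show _ ∈ peiferRels (m+3) from Or.inl (Or.inl ⟨i, rfl⟩))
  simp only [_root_.map_mul, _root_.map_inv, mk_of, mul_inv_eq_one] at h
  exact h

lemma relP_commFin (i j : Fin (m+3)) (h1 : i ≠ j) (h2 : j ≠ i + 1) (h3 : i ≠ j + 1) :
    EPf m i * EPf m j = EPf m j * EPf m i := by
  have h := relOne (show _ ∈ peiferRels (m+3) from Or.inl (Or.inr ⟨i, j, h1, h2, h3, rfl⟩))
  simp only [_root_.map_mul, _root_.map_inv, mk_of, mul_inv_eq_one] at h
  exact h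

lemma relP_shiftFin (i : Fin (m+3)) : EPf m i * tP m = tP m * EPf m (i+1) := by
  have h := relOne (show _ ∈ peiferRels (m+3) from Or.inr ⟨i, rfl⟩)
  simp only [_root_.map_mul, _root_.map_inv, mk_of] at h
  exact shift_rel_one' h

lemma relP_braid (k : ℕ) :
    EP m k * EP m (k+1) * EP m k = EP m (k+1) * EP m k * EP m (k+1) := by
  have h := relP_braidFin m (↑k)
  rwa [← castsucc] at h

lemma relP_shift (k : ℕ) : EP m k * tP m = tP m * EP m (k+1) := by
  have h := relP_shiftFin m (↑k)
  rwa [← castsucc] at h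

lemma relP_comm (i j : ℕ) (h1 : i + 1 < j) (h2 : j < m + 2) :
    EP m i * EP m j = EP m j * EP m i := by
  refine relP_commFin m (↑i) (↑j) ?_ ?_ ?_
  · intro hh
    have := congrArg Fin.val hh
    rw [valcast (by omega), valcast (by omega)] at this
    omega
  · intro hh
    have := congrArg Fin.val (hh.trans (castsucc i).symm)
    rw [valcast (by omega), valcast (by omega)] at this
    omega
  · intro hh
    have := congrArg Fin.val (hh.trans (castsucc j).symm)
    rw [valcast (by omega), valcast (by omega)] at this
    omega

lemma EP_wrap : EP m (m+3) = EP m 0 := by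
  unfold EP
  rw [Fin.natCast_self, Nat.cast_zero]

def βP : PresentedGroup (peiferRels (m+3)) := tP m * (Qp (EP m) (m+2))⁻¹

lemma shiftQ : ∀ k, Qp (EP m) k * tP m = tP m * (Qp (EP m) (k+1) * (EP m 0)⁻¹) := by
  intro k
  induction k with
  | zero =>
    rw [Qp_zero, Qp_succ (EP m) 0, Qp_zero]
    group
  | succ k ih =>
    rw [Qp_succ (EP m) k, Qp_succ (EP m) (k+1)]
    have hs := relP_shift m k
    set a := EP m k
    set b := EP m (k+1)
    set z := EP m 0
    set Q := Qp (EP m) k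
    set R := Qp (EP m) (k+1)
    calc (a * Q) * tP m = a * (Q * tP m) := by group
      _ = a * (tP m * (R * z⁻¹)) := by rw [ih]
      _ = (a * tP m) * (R * z⁻¹) := by group
      _ = (tP m * b) * (R * z⁻¹) := by rw [hs]
      _ = tP m * ((b * R) * z⁻¹) := by group

lemma Pcomm (i : ℕ) (hi : i + 2 ≤ m + 2) : EP m i * βP m = βP m * EP m i := by
  have hstep : EP m i * Qp (EP m) (m+2) = Qp (EP m) (m+2) * EP m (i+1) :=
    stepQ (EP m) (m+2) (m+2) (fun i _ => relP_braid m i) (relP_comm m) (m+2) i hi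
      (le_refl _) hi
  have hs := relP_shift m i
  have hq := semiconj_inv hstep
  unfold βP
  set t := tP m
  set p := EP m i
  set q := EP m (i+1)
  set Q2 := Qp (EP m) (m+2)
  calc p * (t * Q2⁻¹) = (p * t) * Q2⁻¹ := by group
    _ = (t * q) * Q2⁻¹ := by rw [hs]
    _ = t * (q * Q2⁻¹) := by group
    _ = t * (Q2⁻¹ * p) := by rw [hq]
    _ = (t * Q2⁻¹) * p := by group

lemma P4 : EP m (m+1) * βP m * EP m (m+1) * βP m
    = βP m * EP m (m+1) * βP m * EP m (m+1) := by
  have hs1 : EP m (m+1) * tP m = tP m * EP m (m+2) := relP_shift m (m+1)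
  have hs2 : EP m (m+2) * tP m = tP m * EP m 0 := by
    have h := relP_shift m (m+2)
    rwa [(show EP m (m+2+1) = EP m 0 from EP_wrap m)] at h
  have hq : Qp (EP m) (m+1) * tP m
      = tP m * (EP m (m+1) * Qp (EP m) (m+1) * (EP m 0)⁻¹) := by
    have h := shiftQ m (m+1)
    rw [Qp_succ (EP m) (m+1)] at h
    rw [h]
  have hL : EP m (m+1) * (Qp (EP m) (m+1) * (EP m (m+1) * Qp (EP m) (m+1)))
      = (Qp (EP m) (m+1) * (EP m (m+1) * Qp (EP m) (m+1))) * EP m 0 :=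
    LQ (EP m) (m+2) (m+2) (fun i _ => relP_braid m i) (relP_comm m) m (le_refl _) (le_refl _)
  have hβ : βP m = tP m * (EP m (m+1) * Qp (EP m) (m+1))⁻¹ := rfl
  rw [hβ]
  exact key4 hs1 hs2 hq hL

end Pside
end Stmt16Aux
namespace Stmt16Aux

open scoped Fin.NatCast Fin.CommRing

section Iso1
variable (m : ℕ)

/- ### the generator maps -/

def f0 : Fin (m+3) → PresentedGroup (peiferRels (m+3)) :=
  fun i => if (i : ℕ) = m+2 then βP m else EP m (i : ℕ)

def g0 : Fin (m+3) ⊕ Unit → PresentedGroup (artinBRels (m+3)) :=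
  Sum.elim (fun i => eB m (i : ℕ)) (fun _ => τB m)

lemma hf0 : ∀ r ∈ artinBRels (m+3), FreeGroup.lift (f0 m) r = 1 := by
  rintro r ((⟨i, j, hij, hj, rfl⟩ | ⟨i, j, hij, hj, rfl⟩) | ⟨i, j, hij, rfl⟩)
  · -- braid relations
    simp only [_root_.map_mul, _root_.map_inv, FreeGroup.lift_apply_of, mul_inv_eq_one]
    unfold f0
    rw [if_neg (by omega), if_neg (by omega), ← hij]
    exact relP_braid m (i : ℕ)
  · -- length-4 relation
    simp only [_root_.map_mul, _root_.map_inv, FreeGroup.lift_apply_of, mul_inv_eq_one]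
    unfold f0
    rw [if_neg (by omega), if_pos (show (j:ℕ) = m+2 by omega)]
    have hiv : (i : ℕ) = m+1 := by omega
    rw [hiv]
    exact P4 m
  · -- commutation relations
    simp only [_root_.map_mul, _root_.map_inv, FreeGroup.lift_apply_of, mul_inv_eq_one]
    unfold f0
    have hjlt : (j : ℕ) < m + 3 := j.isLt
    rcases Nat.lt_or_ge (j : ℕ) (m+2) with h | h
    · rw [if_neg (by omega), if_neg (by omega)]
      exact relP_comm m (i : ℕ) (j : ℕ) hij (by omega)
    · have hj2 : (j : ℕ) = m+2 := by omega
      rw [if_neg (by omega), if_pos hj2]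
      exact Pcomm m (i : ℕ) (by omega)

lemma hg0 : ∀ r ∈ peiferRels (m+3), FreeGroup.lift (g0 m) r = 1 := by
  have hval1 : ∀ i : Fin (m+3), ((i + 1 : Fin (m+3)) : ℕ) = ((i : ℕ) + 1) % (m+3) := by
    intro i
    rw [show (i + 1 : Fin (m+3)) = (((i : ℕ) + 1 : ℕ) : Fin (m+3)) by
      rw [castsucc, Fin.cast_val_eq_self], Fin.val_natCast]
  have heB1 : ∀ i : Fin (m+3), eB m ((i + 1 : Fin (m+3)) : ℕ) = eB m ((i : ℕ) + 1) := by
    intro i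
    rw [hval1 i, eB_mod]
  rintro r ((⟨i, rfl⟩ | ⟨i, j, hij1, hij2, hij3, rfl⟩) | ⟨i, rfl⟩)
  · -- braid
    simp only [_root_.map_mul, _root_.map_inv, FreeGroup.lift_apply_of, mul_inv_eq_one]
    unfold g0
    simp only [Sum.elim_inl]
    rw [heB1 i]
    exact E1 m (i : ℕ) (by omega)
  · -- commutation
    simp only [_root_.map_mul, _root_.map_inv, FreeGroup.lift_apply_of, mul_inv_eq_one]
    unfold g0
    simp only [Sum.elim_inl]
    have hne : (i : ℕ) ≠ (j : ℕ) := fun hh => hij1 (Fin.ext hh)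
    rcases Nat.lt_or_ge (i : ℕ) (j : ℕ) with hlt | hge
    · refine E2 m (i : ℕ) (j : ℕ) hlt (by omega) ?_ ?_
      · intro hh
        exact hij2 (Fin.ext (by rw [hval1 i, Nat.mod_eq_of_lt (by omega)]; omega))
      · rintro ⟨h0, hm2⟩
        exact hij3 (Fin.ext (by rw [hval1 j, hm2, (show (m+2+1) % (m+3) = 0 from Nat.mod_self _)]; omega))
    · have hlt : (j : ℕ) < (i : ℕ) := by omega
      refine (E2 m (j : ℕ) (i : ℕ) hlt (by omega) ?_ ?_).symm
      · intro hh
        exact hij3 (Fin.ext (by rw [hval1 j, Nat.mod_eq_of_lt (by omega)]; omega))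
      · rintro ⟨h0, hm2⟩
        exact hij2 (Fin.ext (by rw [hval1 i, hm2, (show (m+2+1) % (m+3) = 0 from Nat.mod_self _)]; omega))
  · -- shift
    simp only [_root_.map_mul, _root_.map_inv, FreeGroup.lift_apply_of]
    unfold g0
    simp only [Sum.elim_inl, Sum.elim_inr]
    rw [heB1 i]
    exact shift_rel_one (E3 m (i : ℕ) (by omega))

def fB : PresentedGroup (artinBRels (m+3)) →* PresentedGroup (peiferRels (m+3)) :=
  PresentedGroup.toGroup (hf0 m)

def gP : PresentedGroup (peiferRels (m+3)) →* PresentedGroup (artinBRels (m+3)) :=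
  PresentedGroup.toGroup (hg0 m)

lemma fB_of (i : Fin (m+3)) : fB m (PresentedGroup.of i) = f0 m i :=
  PresentedGroup.toGroup.of _

lemma gP_of (x : Fin (m+3) ⊕ Unit) : gP m (PresentedGroup.of x) = g0 m x :=
  PresentedGroup.toGroup.of _

lemma fB_b (k : ℕ) (h1 : k < m+3) (h2 : k ≠ m+2) : fB m (bB m k) = EP m k := by
  unfold bB
  rw [fB_of]
  unfold f0
  rw [if_neg (by rw [valcast h1]; exact h2), valcast h1]

lemma fB_blast : fB m (bB m (m+2)) = βP m := by
  unfold bB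
  rw [fB_of]
  unfold f0
  rw [if_pos (by rw [valcast (by omega)])]

lemma fB_Qp (k : ℕ) (h : k ≤ m+2) : fB m (Qp (bB m) k) = Qp (EP m) k := by
  induction k with
  | zero => simp [Qp]
  | succ k ih =>
    rw [Qp_succ (bB m) k, Qp_succ (EP m) k, _root_.map_mul, ih (by omega),
      fB_b m k (by omega) (by omega)]

lemma fB_τ : fB m (τB m) = tP m := by
  have hτ : τB m = bB m (m+2) * Qp (bB m) (m+2) := rfl
  rw [hτ, _root_.map_mul, fB_blast, fB_Qp m (m+2) (le_refl _)]
  unfold βP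
  group

lemma gP_e (k : ℕ) : gP m (EP m k) = eB m k := by
  unfold EP EPf
  rw [gP_of]
  unfold g0
  simp only [Sum.elim_inl]
  rw [Fin.val_natCast, eB_mod]

lemma gP_t : gP m (tP m) = τB m := by
  unfold tP
  rw [gP_of]
  rfl

lemma gP_Qp (k : ℕ) (h : k ≤ m+2) : gP m (Qp (EP m) k) = Qp (bB m) k := by
  induction k with
  | zero => simp [Qp]
  | succ k ih =>
    rw [Qp_succ (EP m) k, Qp_succ (bB m) k, _root_.map_mul, ih (by omega), gP_e,
      eB_eq_b m k (by omega) (by omega)]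

lemma gP_fB : (gP m).comp (fB m) = MonoidHom.id _ := by
  apply PresentedGroup.ext
  intro x
  simp only [MonoidHom.comp_apply, MonoidHom.id_apply]
  rw [fB_of]
  unfold f0
  rcases Nat.lt_or_ge (x : ℕ) (m+2) with h | h
  · rw [if_neg (by omega), gP_e, eB_eq_b m _ (by omega) (by omega)]
    unfold bB
    rw [Fin.cast_val_eq_self]
  · have hx : (x : ℕ) = m+2 := by omega
    rw [if_pos hx]
    unfold βP
    rw [_root_.map_mul, _root_.map_inv, gP_t, gP_Qp m (m+2) (le_refl _)]
    have hτ : τB m = bB m (m+2) * Qp (bB m) (m+2) := rfl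
    rw [hτ]
    have : bB m (m+2) = PresentedGroup.of x := by
      unfold bB; rw [← hx, Fin.cast_val_eq_self]
    rw [← this]
    group

lemma fB_gP : (fB m).comp (gP m) = MonoidHom.id _ := by
  apply PresentedGroup.ext
  rintro (i | u)
  · simp only [MonoidHom.comp_apply, MonoidHom.id_apply]
    rw [gP_of]
    unfold g0
    simp only [Sum.elim_inl]
    rcases Nat.lt_or_ge (i : ℕ) (m+2) with h | h
    · rw [eB_eq_b m _ (by omega) (by omega), fB_b m _ (by omega) (by omega)]
      unfold EP EPf
      rw [Fin.cast_val_eq_self]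
    · have hx : (i : ℕ) = m+2 := by omega
      rw [hx, eB_last]
      unfold εB
      rw [_root_.map_mul, _root_.map_mul, _root_.map_inv, fB_τ,
        fB_b m (m+1) (by omega) (by omega)]
      have hsh : EP m (m+1) * tP m = tP m * EP m (m+2) := relP_shift m (m+1)
      have : (tP m)⁻¹ * EP m (m+1) * tP m = EP m (m+2) := by
        rw [mul_assoc, hsh]; group
      rw [this]
      unfold EP EPf
      congr 1
      rw [show ((m+2 : ℕ) : Fin (m+3)) = i by apply Fin.ext; rw [valcast (by omega)]; omega]
  · cases u
    simp only [MonoidHom.comp_apply, MonoidHom.id_apply]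
    rw [gP_of]
    unfold g0
    simp only [Sum.elim_inr]
    rw [fB_τ]
    rfl

def iso1 : PresentedGroup (artinBRels (m+3)) ≃* PresentedGroup (peiferRels (m+3)) :=
  MonoidHom.toMulEquiv (fB m) (gP m) (gP_fB m) (fB_gP m)

end Iso1
end Stmt16Aux
namespace Stmt16Aux

open scoped Fin.NatCast Fin.CommRing

section Aside
variable (m : ℕ)

/- ### the affine Artin group and the shift automorphism -/

lemma relA_braidFin (i : Fin (m+3)) :
    (PresentedGroup.of i : PresentedGroup (artinAffARels (m+3))) * PresentedGroup.of (i+1) *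
      PresentedGroup.of i
    = PresentedGroup.of (i+1) * PresentedGroup.of i * PresentedGroup.of (i+1) := by
  have h := relOne (show _ ∈ artinAffARels (m+3) from Or.inl ⟨i, rfl⟩)
  simp only [_root_.map_mul, _root_.map_inv, mk_of, mul_inv_eq_one] at h
  exact h

lemma relA_commFin (i j : Fin (m+3)) (h1 : i ≠ j) (h2 : j ≠ i + 1) (h3 : i ≠ j + 1) :
    (PresentedGroup.of i : PresentedGroup (artinAffARels (m+3))) * PresentedGroup.of j
    = PresentedGroup.of j * PresentedGroup.of i := by
  have h := relOne (show _ ∈ artinAffARels (m+3) from Or.inr ⟨i, j, h1, h2, h3, rfl⟩)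
  simp only [_root_.map_mul, _root_.map_inv, mk_of, mul_inv_eq_one] at h
  exact h

lemma hsA : ∀ r ∈ artinAffARels (m+3), FreeGroup.lift
    (fun i : Fin (m+3) => (PresentedGroup.of (i+1) : PresentedGroup (artinAffARels (m+3)))) r
      = 1 := by
  rintro r (⟨i, rfl⟩ | ⟨i, j, h1, h2, h3, rfl⟩)
  · simp only [_root_.map_mul, _root_.map_inv, FreeGroup.lift_apply_of, mul_inv_eq_one]
    exact relA_braidFin m (i+1)
  · simp only [_root_.map_mul, _root_.map_inv, FreeGroup.lift_apply_of, mul_inv_eq_one]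
    refine relA_commFin m (i+1) (j+1) ?_ ?_ ?_
    · exact fun hh => h1 (add_right_cancel hh)
    · exact fun hh => h2 (add_right_cancel hh)
    · exact fun hh => h3 (add_right_cancel hh)

lemma hsA' : ∀ r ∈ artinAffARels (m+3), FreeGroup.lift
    (fun i : Fin (m+3) => (PresentedGroup.of (i-1) : PresentedGroup (artinAffARels (m+3)))) r
      = 1 := by
  rintro r (⟨i, rfl⟩ | ⟨i, j, h1, h2, h3, rfl⟩)
  · simp only [_root_.map_mul, _root_.map_inv, FreeGroup.lift_apply_of, mul_inv_eq_one]
    have hr : (i + 1 : Fin (m+3)) - 1 = (i - 1) + 1 := by ring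
    rw [hr]
    exact relA_braidFin m (i-1)
  · simp only [_root_.map_mul, _root_.map_inv, FreeGroup.lift_apply_of, mul_inv_eq_one]
    refine relA_commFin m (i-1) (j-1) ?_ ?_ ?_
    · intro hh
      apply h1
      have := congrArg (· + 1) hh
      simpa using this
    · intro hh
      apply h2
      have := congrArg (· + 1) hh
      simpa using this
    · intro hh
      apply h3
      have := congrArg (· + 1) hh
      simpa using this

def sA : PresentedGroup (artinAffARels (m+3)) →* PresentedGroup (artinAffARels (m+3)) :=
  PresentedGroup.toGroup (hsA m)

def sA' : PresentedGroup (artinAffARels (m+3)) →* PresentedGroup (artinAffARels (m+3)) :=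
  PresentedGroup.toGroup (hsA' m)

def σA : PresentedGroup (artinAffARels (m+3)) ≃* PresentedGroup (artinAffARels (m+3)) :=
  MonoidHom.toMulEquiv (sA m) (sA' m)
    (by
      apply PresentedGroup.ext
      intro i
      simp only [MonoidHom.comp_apply, MonoidHom.id_apply]
      unfold sA sA'
      rw [PresentedGroup.toGroup.of, PresentedGroup.toGroup.of]
      exact congrArg PresentedGroup.of (by ring))
    (by
      apply PresentedGroup.ext
      intro i
      simp only [MonoidHom.comp_apply, MonoidHom.id_apply]
      unfold sA sA'
      rw [PresentedGroup.toGroup.of, PresentedGroup.toGroup.of]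
      exact congrArg PresentedGroup.of (by ring))

lemma σA_of (i : Fin (m+3)) : (σA m) (PresentedGroup.of i) = PresentedGroup.of (i+1) := by
  show sA m (PresentedGroup.of i) = _
  exact PresentedGroup.toGroup.of _

lemma σA_symm_of (i : Fin (m+3)) :
    (σA m).symm (PresentedGroup.of i) = PresentedGroup.of (i-1) := by
  show sA' m (PresentedGroup.of i) = _
  exact PresentedGroup.toGroup.of _

def φA : Multiplicative ℤ →* MulAut (PresentedGroup (artinAffARels (m+3))) :=
  zpowersHom _ (σA m)

lemma φA_one (i : Fin (m+3)) :
    (φA m) (Multiplicative.ofAdd 1) (PresentedGroup.of i) = PresentedGroup.of (i+1) := by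
  have h : (φA m) (Multiplicative.ofAdd 1) = σA m := by
    rw [φA, zpowersHom_apply, toAdd_ofAdd, zpow_one]
  rw [h, σA_of]

/- ### maps between the Peifer group and the semidirect product -/

def f₁ : PresentedGroup (artinAffARels (m+3)) →* PresentedGroup (peiferRels (m+3)) :=
  PresentedGroup.toGroup (f := fun i => PresentedGroup.of (Sum.inl i))
    (by
      rintro r (⟨i, rfl⟩ | ⟨i, j, h1, h2, h3, rfl⟩)
      · simp only [_root_.map_mul, _root_.map_inv, FreeGroup.lift_apply_of, mul_inv_eq_one]
        exact relP_braidFin m i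
      · simp only [_root_.map_mul, _root_.map_inv, FreeGroup.lift_apply_of, mul_inv_eq_one]
        exact relP_commFin m i j h1 h2 h3)

def f₂ : Multiplicative ℤ →* PresentedGroup (peiferRels (m+3)) :=
  zpowersHom _ ((tP m)⁻¹)

lemma f₁_of (i : Fin (m+3)) : f₁ m (PresentedGroup.of i) = PresentedGroup.of (Sum.inl i) :=
  PresentedGroup.toGroup.of _

lemma sigpow (k : ℤ) : ∀ i : Fin (m+3),
    f₁ m ((σA m ^ k) (PresentedGroup.of i))
      = (tP m)⁻¹ ^ k * PresentedGroup.of (Sum.inl i) * ((tP m)⁻¹ ^ k)⁻¹ := by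
  induction k using Int.induction_on with
  | zero => intro i; simp [f₁_of]
  | succ k ih =>
    intro i
    have hz : σA m ^ ((k : ℤ) + 1) = σA m ^ (k : ℤ) * σA m := zpow_add_one _ _
    rw [hz, MulAut.mul_apply, σA_of, ih (i+1)]
    have hsh : EPf m (i+1) = (tP m)⁻¹ * (EPf m i * tP m) := by
      rw [relP_shiftFin]; group
    have hE : (PresentedGroup.of (Sum.inl (i+1)) : PresentedGroup (peiferRels (m+3)))
        = (tP m)⁻¹ * (PresentedGroup.of (Sum.inl i) * tP m) := hsh
    rw [hE]
    have hw : (tP m)⁻¹ ^ ((k : ℤ) + 1) = (tP m)⁻¹ ^ (k : ℤ) * (tP m)⁻¹ := zpow_add_one _ _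
    rw [hw]
    set w := (tP m)⁻¹ ^ (k : ℤ)
    set X := (PresentedGroup.of (Sum.inl i) : PresentedGroup (peiferRels (m+3)))
    set t := tP m
    group
  | pred k ih =>
    intro i
    have hz : σA m ^ (-(k : ℤ) - 1) = σA m ^ (-(k : ℤ)) * (σA m)⁻¹ := zpow_sub_one _ _
    rw [hz, MulAut.mul_apply]
    have hinv : ((σA m)⁻¹ : MulAut (PresentedGroup (artinAffARels (m+3))))
        (PresentedGroup.of i) = (σA m).symm (PresentedGroup.of i) := rfl
    rw [hinv, σA_symm_of, ih (i-1)]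
    have hsh : PresentedGroup.of (Sum.inl (i-1)) * tP m
        = tP m * PresentedGroup.of (Sum.inl i) := by
      have h := relP_shiftFin m (i-1)
      rwa [show i - 1 + 1 = i from by ring] at h
    have hE : (PresentedGroup.of (Sum.inl (i-1)) : PresentedGroup (peiferRels (m+3)))
        = tP m * PresentedGroup.of (Sum.inl i) * (tP m)⁻¹ := by
      rw [← hsh]; group
    rw [hE]
    have hw : (tP m)⁻¹ ^ (-(k : ℤ) - 1) = (tP m)⁻¹ ^ (-(k : ℤ)) * ((tP m)⁻¹)⁻¹ :=
      zpow_sub_one _ _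
    rw [hw]
    set w := (tP m)⁻¹ ^ (-(k : ℤ))
    set X := (PresentedGroup.of (Sum.inl i) : PresentedGroup (peiferRels (m+3)))
    set t := tP m
    group

lemma hcompat : ∀ g : Multiplicative ℤ,
    (f₁ m).comp ((φA m g) : PresentedGroup (artinAffARels (m+3)) ≃*
        PresentedGroup (artinAffARels (m+3))).toMonoidHom
      = (MulAut.conj (f₂ m g)).toMonoidHom.comp (f₁ m) := by
  intro g
  apply PresentedGroup.ext
  intro i
  simp only [MonoidHom.comp_apply, MulEquiv.coe_toMonoidHom, MulAut.conj_apply]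
  have h1 : φA m g = σA m ^ g.toAdd := by rw [φA, zpowersHom_apply]
  have h2 : f₂ m g = (tP m)⁻¹ ^ g.toAdd := by rw [f₂, zpowersHom_apply]
  rw [h1, h2, f₁_of]
  exact sigpow m g.toAdd i

def Fwd0 : Fin (m+3) ⊕ Unit →
    SemidirectProduct (PresentedGroup (artinAffARels (m+3))) (Multiplicative ℤ) (φA m) :=
  Sum.elim (fun i => SemidirectProduct.inl (PresentedGroup.of i))
    (fun _ => SemidirectProduct.inr (Multiplicative.ofAdd (-1)))

lemma hFwd : ∀ r ∈ peiferRels (m+3), FreeGroup.lift (Fwd0 m) r = 1 := by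
  rintro r ((⟨i, rfl⟩ | ⟨i, j, h1, h2, h3, rfl⟩) | ⟨i, rfl⟩)
  · simp only [_root_.map_mul, _root_.map_inv, FreeGroup.lift_apply_of, mul_inv_eq_one,
      Fwd0, Sum.elim_inl]
    rw [← _root_.map_mul, ← _root_.map_mul, ← _root_.map_mul, ← _root_.map_mul]
    exact congrArg _ (relA_braidFin m i)
  · simp only [_root_.map_mul, _root_.map_inv, FreeGroup.lift_apply_of, mul_inv_eq_one,
      Fwd0, Sum.elim_inl]
    rw [← _root_.map_mul, ← _root_.map_mul]
    exact congrArg _ (relA_commFin m i j h1 h2 h3)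
  · simp only [_root_.map_mul, _root_.map_inv, FreeGroup.lift_apply_of, Fwd0,
      Sum.elim_inl, Sum.elim_inr]
    have h1 : ((φA m) (Multiplicative.ofAdd (-1)))⁻¹ = σA m := by
      rw [φA, zpowersHom_apply, toAdd_ofAdd, zpow_neg_one, inv_inv]
    have h2 := SemidirectProduct.inl_aut_inv (φ := φA m) (Multiplicative.ofAdd (-1))
      (PresentedGroup.of i)
    rw [h1, σA_of] at h2
    rw [_root_.map_inv] at h2
    rw [← h2]
    simp

def Fwd : PresentedGroup (peiferRels (m+3)) →*
    SemidirectProduct (PresentedGroup (artinAffARels (m+3))) (Multiplicative ℤ) (φA m) :=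
  PresentedGroup.toGroup (hFwd m)

def Bwd : SemidirectProduct (PresentedGroup (artinAffARels (m+3))) (Multiplicative ℤ) (φA m)
    →* PresentedGroup (peiferRels (m+3)) :=
  SemidirectProduct.lift (f₁ m) (f₂ m) (hcompat m)

lemma BF : (Bwd m).comp (Fwd m) = MonoidHom.id _ := by
  apply PresentedGroup.ext
  rintro (i | u)
  · simp only [MonoidHom.comp_apply, MonoidHom.id_apply]
    rw [Fwd, PresentedGroup.toGroup.of]
    simp only [Fwd0, Sum.elim_inl]
    rw [Bwd, SemidirectProduct.lift_inl, f₁_of]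
  · cases u
    simp only [MonoidHom.comp_apply, MonoidHom.id_apply]
    rw [Fwd, PresentedGroup.toGroup.of]
    simp only [Fwd0, Sum.elim_inr]
    rw [Bwd, SemidirectProduct.lift_inr]
    have : f₂ m (Multiplicative.ofAdd (-1)) = (tP m)⁻¹ ^ (-1 : ℤ) := by
      rw [f₂, zpowersHom_apply, toAdd_ofAdd]
    rw [this]
    simp [tP]

lemma FB : (Fwd m).comp (Bwd m) = MonoidHom.id _ := by
  apply SemidirectProduct.hom_ext
  · rw [MonoidHom.comp_assoc, Bwd, SemidirectProduct.lift_comp_inl]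
    apply PresentedGroup.ext
    intro i
    simp only [MonoidHom.comp_apply, MonoidHom.id_apply]
    rw [f₁_of, Fwd, PresentedGroup.toGroup.of]
    rfl
  · rw [MonoidHom.comp_assoc, Bwd, SemidirectProduct.lift_comp_inr]
    apply MonoidHom.ext_mint
    simp only [MonoidHom.comp_apply, MonoidHom.id_apply]
    have : f₂ m (Multiplicative.ofAdd 1) = (tP m)⁻¹ ^ (1 : ℤ) := by
      rw [f₂, zpowersHom_apply, toAdd_ofAdd]
    rw [this, zpow_one, _root_.map_inv]
    rw [Fwd, tP, PresentedGroup.toGroup.of]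
    simp only [Fwd0, Sum.elim_inr]
    rw [← _root_.map_inv]
    simp

def iso2 : PresentedGroup (peiferRels (m+3)) ≃*
    SemidirectProduct (PresentedGroup (artinAffARels (m+3))) (Multiplicative ℤ) (φA m) :=
  MonoidHom.toMulEquiv (Fwd m) (Bwd m) (BF m) (FB m)

end Aside
end Stmt16Aux

/-- `G_{Bₙ}` is isomorphic to the semidirect product `G_{Ã_{n-1}} ⋊ ℤ`, where the generator
of `ℤ` acts on `G_{Ã_{n-1}}` by cyclically shifting the standard generators; equivalently,
`G_{Bₙ}` admits the Peifer presentation with generators `τ, ε_1, …, ε_n`. -/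
theorem stmt_16 (n : ℕ) [NeZero n] (hn : 3 ≤ n) :
    (∃ φ : Multiplicative ℤ →* MulAut (ArtinAffA n),
      (∀ i : Fin n, φ (Multiplicative.ofAdd 1) (PresentedGroup.of i) =
        (PresentedGroup.of (i + 1) : ArtinAffA n)) ∧
      Nonempty (ArtinB n ≃* SemidirectProduct (ArtinAffA n) (Multiplicative ℤ) φ)) ∧
    Nonempty (ArtinB n ≃* PresentedGroup (peiferRels n)) := by
  obtain ⟨m, rfl⟩ : ∃ m, n = m + 3 := ⟨n - 3, by omega⟩
  constructor
  · have e := (Stmt16Aux.iso1 m).trans (Stmt16Aux.iso2 m)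
    exact ⟨Stmt16Aux.φA m, fun i => Stmt16Aux.φA_one m i,
      ⟨e⟩⟩
  · exact ⟨Stmt16Aux.iso1 m⟩
end

section
/- In the Artin group G_{B_n} with generators τ, ε_1, ..., ε_{n-1} where τ = ε̄_n ε_{n-1} ⋯ ε_1 (ε̄_n the standard last generator), conjugation by τ shifts the first n-2 standard generators: τ^{-1} ε_i τ = ε_{i+1} for 1 ≤ i < n-1. -/
open FreeGroup

/-- The standard generators of `G_{Bₙ}`. -/
def genB (n : ℕ) (i : Fin n) : ArtinB n := PresentedGroup.of i

/-- The element `τ = ε̄_n ε_{n-1} ⋯ ε_2 ε_1` of `G_{Bₙ}`. -/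
def tauB (n : ℕ) : ArtinB n := (((List.finRange n).reverse).map (genB n)).prod

namespace StmtAux

def gN (n : ℕ) (k : ℕ) : ArtinB n := if h : k < n then genB n ⟨k, h⟩ else 1

lemma rel_one {n : ℕ} {r : FreeGroup (Fin n)} (hr : r ∈ artinBRels n) :
    (QuotientGroup.mk r : PresentedGroup (artinBRels n)) = 1 := by
  rw [QuotientGroup.eq_one_iff]
  exact Subgroup.subset_normalClosure hr

lemma genB_mk {n : ℕ} (i : Fin n) :
    genB n i = (QuotientGroup.mk (FreeGroup.of i) : PresentedGroup (artinBRels n)) := rfl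

lemma braid {n : ℕ} (a : ℕ) (h : a + 2 < n) :
    gN n a * gN n (a+1) * gN n a = gN n (a+1) * gN n a * gN n (a+1) := by
  have ha : a < n := by omega
  have hb : a + 1 < n := by omega
  set x := of (⟨a, ha⟩ : Fin n)
  set y := of (⟨a+1, hb⟩ : Fin n)
  have h1 : x * y * x * (y * x * y)⁻¹ ∈ Subgroup.normalClosure (artinBRels n) :=
    Subgroup.subset_normalClosure
      (Or.inl (Or.inl ⟨⟨a, ha⟩, ⟨a+1, hb⟩, rfl, by simp only [Fin.val_mk]; omega, rfl⟩))
  have h2 := (Subgroup.normalClosure_normal (s := artinBRels n)).mem_comm h1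
  have h3 : (QuotientGroup.mk (y * x * y) : PresentedGroup (artinBRels n)) =
      QuotientGroup.mk (x * y * x) := QuotientGroup.eq.mpr h2
  simp only [gN, dif_pos ha, dif_pos hb]
  exact h3.symm

lemma comm {n : ℕ} (a b : ℕ) (hb : b < n) (hab : a + 1 < b) :
    gN n a * gN n b = gN n b * gN n a := by
  have ha : a < n := by omega
  set x := of (⟨a, ha⟩ : Fin n)
  set y := of (⟨b, hb⟩ : Fin n)
  have h1 : x * y * (y * x)⁻¹ ∈ Subgroup.normalClosure (artinBRels n) :=
    Subgroup.subset_normalClosure (Or.inr ⟨⟨a, ha⟩, ⟨b, hb⟩, hab, rfl⟩)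
  have h2 := (Subgroup.normalClosure_normal (s := artinBRels n)).mem_comm h1
  have h3 : (QuotientGroup.mk (y * x) : PresentedGroup (artinBRels n)) =
      QuotientGroup.mk (x * y) := QuotientGroup.eq.mpr h2
  simp only [gN, dif_pos ha, dif_pos hb]
  exact h3.symm

lemma comm_prod {n : ℕ} (a : ℕ) (l : List ℕ)
    (h : ∀ x ∈ l, gN n a * gN n x = gN n x * gN n a) :
    gN n a * (l.map (gN n)).prod = (l.map (gN n)).prod * gN n a := by
  induction l with
  | nil => simp
  | cons x l ih =>
    simp only [List.map_cons, List.prod_cons, ← mul_assoc]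
    rw [h x (by simp), mul_assoc, ih (fun y hy => h y (by simp [hy])), ← mul_assoc]

lemma tauB_eq (n : ℕ) : tauB n = (((List.range n).reverse).map (gN n)).prod := by
  have h : (List.range n).reverse.map (gN n) = (List.finRange n).reverse.map (genB n) := by
    rw [← List.map_coe_finRange_eq_range, ← List.map_reverse, List.map_map]
    exact List.map_congr_left fun i _ => by simp [gN, i.isLt]
  rw [tauB, h]

end StmtAux

open StmtAux in
/-- In `G_{Bₙ}`, conjugation by `τ = ε̄_n ε_{n-1} ⋯ ε_1` shifts the first `n-2` standard
generators forward: `τ⁻¹ ε_i τ = ε_{i+1}` for `1 ≤ i < n-1` (in the 0-based indexing used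
here, for `i` with `i + 2 < n`). -/
theorem stmt_17 (n : ℕ) (hn : 2 ≤ n) (i : Fin n) (hi : (i : ℕ) + 2 < n) :
    (tauB n)⁻¹ * genB n i * tauB n = genB n ⟨(i : ℕ) + 1, by omega⟩ := by
  set a : ℕ := (i : ℕ) with ha
  have hgi : genB n i = gN n a := by simp [gN, ha, dif_pos i.isLt]
  have hgi1 : genB n ⟨(i : ℕ) + 1, by omega⟩ = gN n (a+1) := by
    simp [gN, dif_pos (show a + 1 < n by omega)]
    rfl
  rw [hgi, hgi1]
  -- split tau
  obtain ⟨m, hm⟩ : ∃ m, n = (a + 2) + m := ⟨n - (a+2), by omega⟩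
  have hsplit : (List.range n).reverse =
      ((List.range m).map (a + 2 + ·)).reverse ++ ([a+1, a] ++ (List.range a).reverse) := by
    rw [hm, List.range_add, List.reverse_append]
    congr 1
    show (List.range (a+2)).reverse = _
    rw [show a + 2 = (a+1) + 1 from rfl, List.range_succ, List.range_succ,
      List.reverse_append, List.reverse_append]
    simp
  set A : ArtinB n := (((List.range m).map (a + 2 + ·)).reverse.map (gN n)).prod with hA
  set B : ArtinB n := ((List.range a).reverse.map (gN n)).prod with hB
  have htau : tauB n = A * (gN n (a+1) * (gN n a * B)) := by
    rw [tauB_eq, hsplit, List.map_append, List.prod_append, List.map_append, List.prod_append]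
    simp only [List.map_cons, List.map_nil, List.prod_cons, List.prod_nil, mul_one, mul_assoc]
    rfl
  have hcommA : gN n a * A = A * gN n a := by
    apply comm_prod
    intro x hx
    simp only [List.mem_reverse, List.mem_map, List.mem_range] at hx
    obtain ⟨k, hk, rfl⟩ := hx
    exact comm a _ (by omega) (by omega)
  have hcommB : gN n (a+1) * B = B * gN n (a+1) := by
    have : ∀ x ∈ (List.range a).reverse, gN n (a+1) * gN n x = gN n x * gN n (a+1) := by
      intro x hx
      simp only [List.mem_reverse, List.mem_range] at hx
      exact (comm x (a+1) (by omega) (by omega)).symm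
    exact comm_prod _ _ this
  have key : gN n a * tauB n = tauB n * gN n (a+1) := by
    rw [htau]
    calc gN n a * (A * (gN n (a+1) * (gN n a * B)))
        = A * (gN n a * gN n (a+1) * gN n a) * B := by
          rw [← mul_assoc, hcommA]; group
      _ = A * (gN n (a+1) * gN n a * gN n (a+1)) * B := by rw [braid a (by omega)]
      _ = A * (gN n (a+1) * gN n a) * (gN n (a+1) * B) := by group
      _ = A * (gN n (a+1) * (gN n a * B)) * gN n (a+1) := by rw [hcommB]; group
  rw [mul_assoc, key, ← mul_assoc, inv_mul_cancel, one_mul]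
end

section
/- The map sending σ_i ↦ (matrix acting on basis by e_i ↦ u·e_{i+1}, e_{i+1} ↦ e_i, e_j ↦ e_j for j ≠ i, i+1) defines a group homomorphism from the braid group Br_{n+1} = G_{A_n} to GL_{n+1}(ℚ[u^{±1}]) (the Tong–Yang–Ma representation); i.e., the assigned matrices satisfy the braid relations ρ(σ_i)ρ(σ_{i+1})ρ(σ_i) = ρ(σ_{i+1})ρ(σ_i)ρ(σ_{i+1}) and ρ(σ_i)ρ(σ_j) = ρ(σ_j)ρ(σ_i) for |i-j| ≥ 2. -/
open LaurentPolynomial Equiv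

noncomputable def tymMatrix (n : ℕ) (i : Fin n) :
    Matrix (Fin (n + 1)) (Fin (n + 1)) (LaurentPolynomial ℚ) :=
  Matrix.of fun a b =>
    if a = i.castSucc ∧ b = i.succ then 1
    else if a = i.succ ∧ b = i.castSucc then LaurentPolynomial.T 1
    else if a = b ∧ a ≠ i.castSucc ∧ a ≠ i.succ then 1
    else 0

namespace TymAux

noncomputable def mono {n : ℕ} (f : Fin (n+1) → Fin (n+1))
    (c : Fin (n+1) → LaurentPolynomial ℚ) :
    Matrix (Fin (n+1)) (Fin (n+1)) (LaurentPolynomial ℚ) :=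
  Matrix.of fun a b => if b = f a then c a else 0

lemma mono_congr {n : ℕ} {f g : Fin (n+1) → Fin (n+1)}
    {c d : Fin (n+1) → LaurentPolynomial ℚ}
    (h1 : ∀ a, f a = g a) (h2 : ∀ a, c a = d a) : mono f c = mono g d := by
  unfold mono
  rw [show f = g from funext h1, show c = d from funext h2]

lemma mono_mul {n : ℕ} (f : Fin (n+1) → Fin (n+1)) (c : Fin (n+1) → LaurentPolynomial ℚ)
    (M : Matrix (Fin (n+1)) (Fin (n+1)) (LaurentPolynomial ℚ)) :
    mono f c * M = Matrix.of fun a b => c a * M (f a) b := by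
  apply Matrix.ext; intro a b
  simp [mono, Matrix.mul_apply, ite_mul, Finset.sum_ite_eq']

lemma mono_mul_mono {n : ℕ} (f g : Fin (n+1) → Fin (n+1))
    (c d : Fin (n+1) → LaurentPolynomial ℚ) :
    mono f c * mono g d = mono (fun a => g (f a)) (fun a => c a * d (f a)) := by
  rw [mono_mul]
  apply Matrix.ext; intro a b
  simp [mono, mul_ite]

lemma mono_id_one {n : ℕ} : mono (n := n) (fun a => a) (fun _ => 1) = 1 := by
  apply Matrix.ext; intro a b
  simp [mono, Matrix.one_apply, eq_comm]

lemma tym_eq {n : ℕ} (i : Fin n) :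
    tymMatrix n i = mono (Equiv.swap i.castSucc i.succ)
      (fun a => if a = i.succ then T 1 else 1) := by
  have hxy : i.castSucc ≠ i.succ := (Fin.castSucc_lt_succ (i := i)).ne
  apply Matrix.ext; intro a b
  by_cases hx : a = i.castSucc
  · subst hx
    simp [tymMatrix, mono, Equiv.swap_apply_left, hxy, hxy.symm]
  · by_cases hy : a = i.succ
    · subst hy
      simp [tymMatrix, mono, Equiv.swap_apply_right, hxy.symm]
    · simp [tymMatrix, mono, Equiv.swap_apply_of_ne_of_ne hx hy, hx, hy, eq_comm]

end TymAux

open TymAux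

/-- The Tong–Yang–Ma matrices define a group homomorphism from the braid group
`Br_{n+1} = G_{Aₙ}` to `GL_{n+1}(ℚ[u^{±1}])`: each matrix is invertible, and the matrices
satisfy the braid relations `ρ(σ_i)ρ(σ_{i+1})ρ(σ_i) = ρ(σ_{i+1})ρ(σ_i)ρ(σ_{i+1})` and the
commutation relations `ρ(σ_i)ρ(σ_j) = ρ(σ_j)ρ(σ_i)` for `|i - j| ≥ 2`. -/
theorem stmt_18 (n : ℕ) :
    (∀ i : Fin n, IsUnit (tymMatrix n i)) ∧
    (∀ i j : Fin n, (i : ℕ) + 1 = (j : ℕ) →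
      tymMatrix n i * tymMatrix n j * tymMatrix n i =
        tymMatrix n j * tymMatrix n i * tymMatrix n j) ∧
    (∀ i j : Fin n, (i : ℕ) + 2 ≤ (j : ℕ) →
      tymMatrix n i * tymMatrix n j = tymMatrix n j * tymMatrix n i) := by
  refine ⟨?_, ?_, ?_⟩
  · -- invertibility
    intro i
    have hxy : i.castSucc ≠ i.succ := (Fin.castSucc_lt_succ (i := i)).ne
    set N : Matrix (Fin (n+1)) (Fin (n+1)) (LaurentPolynomial ℚ) :=
      mono (Equiv.swap i.castSucc i.succ) (fun a => if a = i.castSucc then T (-1) else 1) with hN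
    have hMN : tymMatrix n i * N = 1 := by
      rw [tym_eq, hN, mono_mul_mono, ← mono_id_one]
      apply mono_congr
      · intro a; exact Equiv.swap_apply_self _ _ a
      · intro a
        by_cases hx : a = i.castSucc
        · subst hx
          simp [Equiv.swap_apply_left, hxy, hxy.symm]
        · by_cases hy : a = i.succ
          · subst hy
            rw [Equiv.swap_apply_right, if_pos rfl, if_pos rfl, ← T_add]
            norm_num
          · simp [Equiv.swap_apply_of_ne_of_ne hx hy, hx, hy]
    exact ⟨⟨tymMatrix n i, N, hMN, mul_eq_one_comm.mp hMN⟩, rfl⟩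
  · -- braid relation
    intro i j hij
    have hyc : j.castSucc = i.succ := by
      apply Fin.ext; simp [hij.symm]
    have hxy : i.castSucc ≠ i.succ := (Fin.castSucc_lt_succ (i := i)).ne
    have hxz : i.castSucc ≠ j.succ := Fin.ne_of_val_ne (by simp; omega)
    have hyz : i.succ ≠ j.succ := Fin.ne_of_val_ne (by simp; omega)
    rw [tym_eq i, tym_eq j, hyc, mono_mul_mono, mono_mul_mono, mono_mul_mono, mono_mul_mono]
    apply mono_congr <;> intro a <;>
    · by_cases hx : a = i.castSucc
      · subst hx
        simp [Equiv.swap_apply_left, Equiv.swap_apply_right,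
          Equiv.swap_apply_of_ne_of_ne hxy hxz, Equiv.swap_apply_of_ne_of_ne hxz.symm hyz.symm,
          hxy, hxz, hyz, hxy.symm, hxz.symm, hyz.symm]
      · by_cases hy : a = i.succ
        · subst hy
          simp [Equiv.swap_apply_left, Equiv.swap_apply_right,
          Equiv.swap_apply_of_ne_of_ne hxy hxz, Equiv.swap_apply_of_ne_of_ne hxz.symm hyz.symm,
          hxy, hxz, hyz, hxy.symm, hxz.symm, hyz.symm]
        · by_cases hz : a = j.succ
          · subst hz
            simp [Equiv.swap_apply_left, Equiv.swap_apply_right,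
          Equiv.swap_apply_of_ne_of_ne hxy hxz, Equiv.swap_apply_of_ne_of_ne hxz.symm hyz.symm,
          hxy, hxz, hyz, hxy.symm, hxz.symm, hyz.symm]
          · simp [Equiv.swap_apply_of_ne_of_ne hx hy, Equiv.swap_apply_of_ne_of_ne hy hz,
              hx, hy, hz]
  · -- commutation
    intro i j hij
    have hxy : i.castSucc ≠ i.succ := (Fin.castSucc_lt_succ (i := i)).ne
    have hpq : j.castSucc ≠ j.succ := (Fin.castSucc_lt_succ (i := j)).ne
    have hxp : i.castSucc ≠ j.castSucc := Fin.ne_of_val_ne (by simp; omega)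
    have hxq : i.castSucc ≠ j.succ := Fin.ne_of_val_ne (by simp; omega)
    have hyp : i.succ ≠ j.castSucc := Fin.ne_of_val_ne (by simp; omega)
    have hyq : i.succ ≠ j.succ := Fin.ne_of_val_ne (by simp; omega)
    rw [tym_eq i, tym_eq j, mono_mul_mono, mono_mul_mono]
    apply mono_congr <;> intro a <;>
    · by_cases hx : a = i.castSucc
      · subst hx
        simp [Equiv.swap_apply_left, Equiv.swap_apply_right,
          Equiv.swap_apply_of_ne_of_ne hxp hxq, Equiv.swap_apply_of_ne_of_ne hyp hyq,
          Equiv.swap_apply_of_ne_of_ne hxp.symm hyp.symm,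
          Equiv.swap_apply_of_ne_of_ne hxq.symm hyq.symm,
          hxy, hpq, hxp, hxq, hyp, hyq, hxy.symm, hpq.symm, hxp.symm, hxq.symm, hyp.symm, hyq.symm]
      · by_cases hy : a = i.succ
        · subst hy
          simp [Equiv.swap_apply_left, Equiv.swap_apply_right,
          Equiv.swap_apply_of_ne_of_ne hxp hxq, Equiv.swap_apply_of_ne_of_ne hyp hyq,
          Equiv.swap_apply_of_ne_of_ne hxp.symm hyp.symm,
          Equiv.swap_apply_of_ne_of_ne hxq.symm hyq.symm,
          hxy, hpq, hxp, hxq, hyp, hyq, hxy.symm, hpq.symm, hxp.symm, hxq.symm, hyp.symm, hyq.symm]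
        · by_cases hp : a = j.castSucc
          · subst hp
            simp [Equiv.swap_apply_left, Equiv.swap_apply_right,
          Equiv.swap_apply_of_ne_of_ne hxp hxq, Equiv.swap_apply_of_ne_of_ne hyp hyq,
          Equiv.swap_apply_of_ne_of_ne hxp.symm hyp.symm,
          Equiv.swap_apply_of_ne_of_ne hxq.symm hyq.symm,
          hxy, hpq, hxp, hxq, hyp, hyq, hxy.symm, hpq.symm, hxp.symm, hxq.symm, hyp.symm, hyq.symm]
          · by_cases hq : a = j.succ
            · subst hq
              simp [Equiv.swap_apply_left, Equiv.swap_apply_right,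
          Equiv.swap_apply_of_ne_of_ne hxp hxq, Equiv.swap_apply_of_ne_of_ne hyp hyq,
          Equiv.swap_apply_of_ne_of_ne hxp.symm hyp.symm,
          Equiv.swap_apply_of_ne_of_ne hxq.symm hyq.symm,
          hxy, hpq, hxp, hxq, hyp, hyq, hxy.symm, hpq.symm, hxp.symm, hxq.symm, hyp.symm, hyq.symm]
            · simp [Equiv.swap_apply_of_ne_of_ne hx hy, Equiv.swap_apply_of_ne_of_ne hp hq,
                hx, hy, hp, hq]
end
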